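/- arXiv:1906.08656 — 3 statements merged into one kernel-verified Lean document; each statement's English description precedes it below -/
import Mathlib

section
/- Distribution-independent regret bound for ELIM: for every number of arms K ≥ 1, every horizon T ≥ 1, and every probability distribution ν on [0,1]^K, the pseudo-regret of the ELIM algorithm run with horizon T satisfies R(T) = E[∑_{t=1}^T (μ_{i*} − μ_{I_t})] ≤ 4·√(2T·ln(K·T²)) + 3. -/
open MeasureTheory Finset

/-- Empirical mean of arm `i` after `t` rounds (rounds are 0-indexed: `X s` is the
reward vector of round `s + 1`). -/
noncomputable def empMean {K : ℕ} (X : ℕ → Fin K → ℝ) (t : ℕ) (i : Fin K) : ℝ :=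
  (∑ s ∈ Finset.range t, X s i) / t

/-- The confidence radius `ρ_t = √(ln(K T²) / (2 (t-1)))`, with `ρ_1 = ∞`. -/
noncomputable def elimRho (K T t : ℕ) : EReal :=
  if t ≤ 1 then ⊤
  else ((Real.sqrt (Real.log ((K : ℝ) * (T : ℝ) ^ 2) / (2 * ((t : ℝ) - 1)))) : ℝ)

open scoped Classical in
/-- The set `S_t` of surviving arms of the ELIM algorithm with `K` arms and horizon `T`:
`S_0 = [K]`, and `S_t` keeps exactly those arms of `S_{t-1}` whose empirical mean after
`t - 1` rounds is within `2 ρ_t` of the best empirical mean over `S_{t-1}`. -/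
noncomputable def elimS (K T : ℕ) (X : ℕ → Fin K → ℝ) : ℕ → Finset (Fin K)
  | 0 => Finset.univ
  | t + 1 =>
      (elimS K T X t).filter fun i =>
        ∀ j ∈ elimS K T X t,
          ((empMean X t j - empMean X t i : ℝ) : EReal) ≤ 2 * elimRho K T (t + 1)

/-- The arm `I_t = min S_t` played by ELIM at round `t`. -/
noncomputable def elimI (K T : ℕ) [NeZero K] (X : ℕ → Fin K → ℝ) (t : ℕ) : Fin K :=
  if h : (elimS K T X t).Nonempty then (elimS K T X t).min' h else 0

/-- Extend a reward matrix on `Fin T` rounds to all of `ℕ` (by junk values `0`). -/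
noncomputable def extendRewards {K : ℕ} (T : ℕ) (ω : Fin T → Fin K → ℝ) :
    ℕ → Fin K → ℝ :=
  fun s => if h : s < T then ω ⟨s, h⟩ else 0

section ElimAux

private lemma Dpos {p : ℝ} (hp0 : 0 ≤ p) (hp1 : p ≤ 1) (l : ℝ) :
    0 < 1 - p + p * Real.exp l := by
  rcases eq_or_lt_of_le hp1 with h | h
  · subst h; simpa using Real.exp_pos l
  · have : 0 ≤ p * Real.exp l := mul_nonneg hp0 (Real.exp_pos l).le
    linarith

/-- Hoeffding's lemma, analytic core: `1 - p + p e^λ ≤ exp (p λ + λ²/8)`. -/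
lemma hoeffding_core {p : ℝ} (hp0 : 0 ≤ p) (hp1 : p ≤ 1) (l : ℝ) :
    1 - p + p * Real.exp l ≤ Real.exp (p * l + l ^ 2 / 8) := by
  set D : ℝ → ℝ := fun x => 1 - p + p * Real.exp x with hD
  have hDpos : ∀ x, 0 < D x := fun x => Dpos hp0 hp1 x
  set u : ℝ → ℝ := fun x => p * Real.exp x / D x with hu
  have hu0 : ∀ x, 0 ≤ u x := fun x =>
    div_nonneg (mul_nonneg hp0 (Real.exp_pos x).le) (hDpos x).le
  have hu1 : ∀ x, u x ≤ 1 := by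
    intro x
    rw [div_le_one (hDpos x)]
    have : 0 ≤ 1 - p := by linarith
    simp only [hD]; linarith
  -- f = p x + x²/8 - log (D x)
  set f : ℝ → ℝ := fun x => p * x + x ^ 2 / 8 - Real.log (D x) with hf
  set f1 : ℝ → ℝ := fun x => p + x / 4 - u x with hf1
  have hDderiv : ∀ x, HasDerivAt D (p * Real.exp x) x := by
    intro x
    exact ((Real.hasDerivAt_exp x).const_mul p).const_add (1 - p)
  have hfderiv : ∀ x, HasDerivAt f (f1 x) x := by
    intro x
    have h1 : HasDerivAt (fun x => p * x + x ^ 2 / 8) (p + x / 4) x := by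
      have := ((hasDerivAt_pow 2 x).div_const 8).const_add 0
      have h2 : HasDerivAt (fun y : ℝ => p * y) p x := by
        simpa using (hasDerivAt_id x).const_mul p
      have h4 : HasDerivAt (fun y : ℝ => y ^ 2 / 8) (x / 4) x := by
        simpa using ((hasDerivAt_pow 2 x).div_const 8).congr_deriv (by push_cast; ring)
      exact h2.add h4
    have h3 : HasDerivAt (fun x => Real.log (D x)) (p * Real.exp x / D x) x :=
      (hDderiv x).log (hDpos x).ne'
    exact h1.sub h3
  have hf1deriv : ∀ x, HasDerivAt f1 (1 / 4 - u x * (1 - u x)) x := by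
    intro x
    have h1 : HasDerivAt (fun y : ℝ => p + y / 4) (1 / 4) x := by
      simpa using ((hasDerivAt_id x).div_const 4).const_add p
    have h2 : HasDerivAt u ((p * Real.exp x * D x - p * Real.exp x * (p * Real.exp x)) / D x ^ 2) x := by
      have := ((hDderiv x).const_mul p |>.congr_deriv rfl)
      exact ((Real.hasDerivAt_exp x).const_mul p).div (hDderiv x) (hDpos x).ne'
    have h2' : HasDerivAt u (u x * (1 - u x)) x := by
      convert h2 using 1
      have hx := (hDpos x).ne'
      simp only [hu]
      field_simp
    exact h1.sub h2'
  have hquarter : ∀ x, u x * (1 - u x) ≤ 1 / 4 := by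
    intro x
    nlinarith [sq_nonneg (u x - 1 / 2)]
  -- f1 monotone
  have hf1mono : Monotone f1 := by
    have hdiff : Differentiable ℝ f1 := fun x => (hf1deriv x).differentiableAt
    refine monotone_of_deriv_nonneg hdiff ?_
    intro x
    rw [(hf1deriv x).deriv]
    have := hquarter x; linarith
  have hf1zero : f1 0 = 0 := by
    simp [hf1, hu, hD]
  have hfdiff : Differentiable ℝ f := fun x => (hfderiv x).differentiableAt
  have hf0 : f 0 = 0 := by simp [hf, hD]
  have hfnonneg : ∀ x, 0 ≤ f x := by
    intro x
    rcases le_total 0 x with hx | hx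
    · have hmono : MonotoneOn f (Set.Ici 0) := by
        refine monotoneOn_of_deriv_nonneg (convex_Ici 0) hfdiff.continuous.continuousOn
          hfdiff.differentiableOn ?_
        intro y hy
        rw [interior_Ici] at hy
        rw [(hfderiv y).deriv]
        have := hf1mono (le_of_lt hy)
        rw [hf1zero] at this
        linarith
      have := hmono (Set.self_mem_Ici) hx hx
      linarith [hf0]
    · have hmono : AntitoneOn f (Set.Iic 0) := by
        refine antitoneOn_of_deriv_nonpos (convex_Iic 0) hfdiff.continuous.continuousOn
          hfdiff.differentiableOn ?_
        intro y hy
        rw [interior_Iic] at hy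
        rw [(hfderiv y).deriv]
        have := hf1mono (le_of_lt hy)
        rw [hf1zero] at this
        linarith
      have := hmono hx (Set.self_mem_Iic) hx
      linarith [hf0]
  have := hfnonneg l
  have hlog : Real.log (D l) ≤ p * l + l ^ 2 / 8 := by
    simp only [hf] at this; linarith
  calc D l = Real.exp (Real.log (D l)) := (Real.exp_log (hDpos l)).symm
    _ ≤ Real.exp (p * l + l ^ 2 / 8) := Real.exp_le_exp.2 hlog

variable {K : ℕ}

lemma integrable_eval (ν : Measure (Fin K → ℝ)) [IsProbabilityMeasure ν]
    (hsupp : ∀ᵐ x ∂ν, ∀ i, x i ∈ Set.Icc (0 : ℝ) 1) (i : Fin K) :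
    Integrable (fun x => x i) ν := by
  refine Integrable.mono' (integrable_const 1) (measurable_pi_apply i).aestronglyMeasurable ?_
  filter_upwards [hsupp] with x hx
  rw [Real.norm_eq_abs, abs_le]
  exact ⟨by linarith [(hx i).1], (hx i).2⟩

lemma mgf_one (ν : Measure (Fin K → ℝ)) [IsProbabilityMeasure ν]
    (hsupp : ∀ᵐ x ∂ν, ∀ i, x i ∈ Set.Icc (0 : ℝ) 1) (i : Fin K)
    {p : ℝ} (hp : p = ∫ x, x i ∂ν) (l : ℝ) :
    ∫ x, Real.exp (l * (x i - p)) ∂ν ≤ Real.exp (l ^ 2 / 8) := by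
  have hp0 : 0 ≤ p := by
    rw [hp]; exact integral_nonneg_of_ae (by filter_upwards [hsupp] with x hx using (hx i).1)
  have hp1 : p ≤ 1 := by
    rw [hp]
    calc ∫ x, x i ∂ν ≤ ∫ _, (1:ℝ) ∂ν :=
          integral_mono_ae (integrable_eval ν hsupp i) (integrable_const 1)
            (by filter_upwards [hsupp] with x hx using (hx i).2)
      _ = 1 := by simp
  have key : ∀ x : Fin K → ℝ, x i ∈ Set.Icc (0:ℝ) 1 →
      Real.exp (l * (x i - p)) ≤ Real.exp (-(l * p)) * (1 - x i + x i * Real.exp l) := by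
    intro x hx
    have hconv := convexOn_exp.2 (Set.mem_univ (0:ℝ)) (Set.mem_univ l)
      (by linarith [hx.2] : (0:ℝ) ≤ 1 - x i) hx.1 (by ring)
    simp only [smul_eq_mul, mul_zero, Real.exp_zero, mul_one] at hconv
    have : Real.exp (l * (x i - p)) = Real.exp (-(l * p)) * Real.exp (x i * l) := by
      rw [← Real.exp_add]; ring_nf
    rw [this]
    have h2 : Real.exp (x i * l) ≤ 1 - x i + x i * Real.exp l := by
      have h0 : (0:ℝ) + x i * l = x i * l := by ring
      rw [h0] at hconv
      linarith [hconv]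
    exact mul_le_mul_of_nonneg_left h2 (Real.exp_pos _).le
  have hmeas : Measurable fun x : Fin K → ℝ => Real.exp (l * (x i - p)) :=
    (Real.measurable_exp.comp (by fun_prop))
  have hint : Integrable (fun x => Real.exp (l * (x i - p))) ν := by
    refine Integrable.mono' (integrable_const (Real.exp (|l| * (1 + |p|))))
      hmeas.aestronglyMeasurable ?_
    filter_upwards [hsupp] with x hx
    rw [Real.norm_eq_abs, abs_of_pos (Real.exp_pos _), Real.exp_le_exp]
    have h1 : |x i - p| ≤ 1 + |p| := by
      have := abs_sub_abs_le_abs_sub (x i) p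
      have h2 : |x i| ≤ 1 := abs_le.2 ⟨by linarith [(hx i).1], (hx i).2⟩
      calc |x i - p| ≤ |x i| + |p| := abs_sub (x i) p
        _ ≤ 1 + |p| := by linarith
    calc l * (x i - p) ≤ |l * (x i - p)| := le_abs_self _
      _ = |l| * |x i - p| := abs_mul _ _
      _ ≤ |l| * (1 + |p|) := mul_le_mul_of_nonneg_left h1 (abs_nonneg l)
  have hintlin : Integrable (fun x => Real.exp (-(l * p)) * (1 - x i + x i * Real.exp l)) ν := by
    apply Integrable.const_mul
    exact ((integrable_const 1).sub (integrable_eval ν hsupp i)).add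
      ((integrable_eval ν hsupp i).mul_const _)
  calc ∫ x, Real.exp (l * (x i - p)) ∂ν
      ≤ ∫ x, Real.exp (-(l * p)) * (1 - x i + x i * Real.exp l) ∂ν := by
        refine integral_mono_ae hint hintlin ?_
        filter_upwards [hsupp] with x hx using key x (hx i)
    _ = Real.exp (-(l * p)) * (1 - p + p * Real.exp l) := by
        rw [integral_const_mul]
        congr 1
        have e1 : ∀ a : Fin K → ℝ, 1 - a i + a i * Real.exp l
            = 1 + (Real.exp l - 1) * a i := by intro a; ring
        rw [integral_congr_ae (Filter.Eventually.of_forall e1),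
          integral_add (integrable_const 1) ((integrable_eval ν hsupp i).const_mul _),
          integral_const_mul, ← hp]
        simp only [integral_const, measure_univ, probReal_univ, ENNReal.toReal_one, smul_eq_mul, mul_one]
        ring
    _ ≤ Real.exp (-(l * p)) * Real.exp (p * l + l ^ 2 / 8) :=
        mul_le_mul_of_nonneg_left (hoeffding_core hp0 hp1 l) (Real.exp_pos _).le
    _ = Real.exp (l ^ 2 / 8) := by rw [← Real.exp_add]; ring_nf

variable {K T : ℕ} (ν : Measure (Fin K → ℝ)) [IsProbabilityMeasure ν]

lemma meas_extend (s : ℕ) (i : Fin K) :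
    Measurable fun ω : Fin T → Fin K → ℝ => extendRewards T ω s i := by
  unfold extendRewards
  by_cases h : s < T
  · simp only [dif_pos h]
    exact (measurable_pi_apply i).comp (measurable_pi_apply _)
  · simp only [dif_neg h]
    exact measurable_const

lemma measA : MeasurableSet {x : Fin K → ℝ | ∀ i, x i ∈ Set.Icc (0:ℝ) 1} := by
  have : {x : Fin K → ℝ | ∀ i, x i ∈ Set.Icc (0:ℝ) 1}
      = ⋂ i, (fun x : Fin K → ℝ => x i) ⁻¹' Set.Icc 0 1 := by
    ext x; simp
  rw [this]
  exact MeasurableSet.iInter fun i => (measurable_pi_apply i) measurableSet_Icc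

lemma hsupp_pi (hsupp : ∀ᵐ x ∂ν, ∀ i, x i ∈ Set.Icc (0 : ℝ) 1) :
    ∀ᵐ ω ∂(Measure.pi fun _ : Fin T => ν), ∀ (s : Fin T) (i : Fin K),
      ω s i ∈ Set.Icc (0:ℝ) 1 := by
  set A := {x : Fin K → ℝ | ∀ i, x i ∈ Set.Icc (0:ℝ) 1} with hA
  have hAmeas : MeasurableSet A := measA
  have hA1 : ν A = 1 := by
    rw [← prob_compl_eq_zero_iff hAmeas]
    rw [MeasureTheory.ae_iff] at hsupp
    exact hsupp
  set B := Set.univ.pi (fun _ : Fin T => A) with hB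
  have hBmeas : MeasurableSet B := MeasurableSet.univ_pi fun _ => hAmeas
  have hB1 : (Measure.pi fun _ : Fin T => ν) B = 1 := by
    rw [hB, Measure.pi_pi]
    simp [hA1]
  rw [MeasureTheory.ae_iff]
  refine measure_mono_null ?_ ((prob_compl_eq_zero_iff hBmeas).2 hB1)
  intro ω hω
  simp only [Set.mem_setOf_eq, not_forall] at hω
  intro hmem
  rw [hB, Set.mem_univ_pi] at hmem
  obtain ⟨s, i, hsi⟩ := hω
  exact hsi (hmem s i)

lemma prod_rewrite (τ : ℕ) (hτT : τ ≤ T) (i : Fin K) (l p : ℝ) (ω : Fin T → Fin K → ℝ) :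
    Real.exp (l * ((∑ s ∈ range τ, extendRewards T ω s i) - τ * p))
      = ∏ s : Fin T, (if (s : ℕ) < τ then Real.exp (l * (ω s i - p)) else 1) := by
  have hfilter : (range T).filter (fun s => s < τ) = range τ := by
    ext s; simp only [mem_filter, mem_range]; omega
  have h1 : l * ((∑ s ∈ range τ, extendRewards T ω s i) - τ * p)
      = ∑ s ∈ range τ, l * (extendRewards T ω s i - p) := by
    rw [eq_comm]
    calc ∑ s ∈ range τ, l * (extendRewards T ω s i - p)
        = ∑ s ∈ range τ, (l * extendRewards T ω s i - l * p) :=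
          Finset.sum_congr rfl fun s _ => by ring
      _ = (∑ s ∈ range τ, l * extendRewards T ω s i) - τ * (l * p) := by
          rw [Finset.sum_sub_distrib, Finset.sum_const, card_range, nsmul_eq_mul]
      _ = l * ((∑ s ∈ range τ, extendRewards T ω s i) - τ * p) := by
          rw [mul_sub, Finset.mul_sum]
          ring
  rw [h1, Real.exp_sum]
  rw [← hfilter, Finset.prod_filter]
  rw [← Fin.prod_univ_eq_prod_range
    (fun s => if s < τ then Real.exp (l * (extendRewards T ω s i - p)) else 1) T]
  refine Finset.prod_congr rfl fun s _ => ?_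
  by_cases h : (s : ℕ) < τ
  · simp only [if_pos h]
    congr 2
    unfold extendRewards
    rw [dif_pos s.isLt]
  · simp [h]

lemma mgf_prod_le (hsupp : ∀ᵐ x ∂ν, ∀ i, x i ∈ Set.Icc (0 : ℝ) 1)
    (τ : ℕ) (hτT : τ ≤ T) (i : Fin K) {p : ℝ} (hp : p = ∫ x, x i ∂ν) (l : ℝ) :
    ∫ ω, Real.exp (l * ((∑ s ∈ range τ, extendRewards T ω s i) - τ * p))
        ∂(Measure.pi fun _ : Fin T => ν)
      ≤ Real.exp (τ * (l ^ 2 / 8)) := by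
  letI : MeasureSpace (Fin K → ℝ) := ⟨ν⟩
  have hvol : (volume : Measure (Fin T → Fin K → ℝ)) = Measure.pi fun _ : Fin T => ν :=
    rfl
  haveI : IsProbabilityMeasure (volume : Measure (Fin K → ℝ)) :=
    (inferInstance : IsProbabilityMeasure ν)
  rw [← hvol]
  have hre : ∀ ω : Fin T → Fin K → ℝ,
      Real.exp (l * ((∑ s ∈ range τ, extendRewards T ω s i) - τ * p))
        = ∏ s : Fin T, (fun s (x : Fin K → ℝ) =>
            if (s : ℕ) < τ then Real.exp (l * (x i - p)) else 1) s (ω s) :=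
    fun ω => prod_rewrite τ hτT i l p ω
  rw [integral_congr_ae (Filter.Eventually.of_forall hre), hvol,
    MeasureTheory.integral_fintype_prod_eq_prod (ι := Fin T)
      (fun (s : Fin T) (x : Fin K → ℝ) => if (s : ℕ) < τ then Real.exp (l * (x i - p)) else 1)]
  have hfac : ∀ s : Fin T,
      (∫ x : Fin K → ℝ, if (s : ℕ) < τ then Real.exp (l * (x i - p)) else 1)
        ≤ (if (s : ℕ) < τ then Real.exp (l ^ 2 / 8) else 1) := by
    intro s
    by_cases h : (s : ℕ) < τ
    · simp only [if_pos h]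
      exact mgf_one ν hsupp i hp l
    · simp [h]
  have hnn : ∀ s : Fin T, 0 ≤ ∫ x : Fin K → ℝ, if (s : ℕ) < τ then Real.exp (l * (x i - p)) else 1 := by
    intro s
    refine integral_nonneg fun x => ?_
    by_cases h : (s : ℕ) < τ <;> simp [h, (Real.exp_pos _).le]
  calc (∏ s : Fin T, ∫ x : Fin K → ℝ, if (s : ℕ) < τ then Real.exp (l * (x i - p)) else 1)
      ≤ ∏ s : Fin T, (if (s : ℕ) < τ then Real.exp (l ^ 2 / 8) else 1) :=
        Finset.prod_le_prod (fun s _ => hnn s) (fun s _ => hfac s)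
    _ = Real.exp (τ * (l ^ 2 / 8)) := by
        rw [Fin.prod_univ_eq_prod_range (fun s => if s < τ then Real.exp (l ^ 2 / 8) else 1) T,
          ← Finset.prod_filter]
        have hfilter : (range T).filter (fun s => s < τ) = range τ := by
          ext s; simp only [mem_filter, mem_range]; omega
        rw [hfilter, Finset.prod_const, card_range, ← Real.exp_nat_mul]

lemma meas_Xf (τ : ℕ) (i : Fin K) (p : ℝ) :
    Measurable fun ω : Fin T → Fin K → ℝ =>
      (∑ s ∈ range τ, extendRewards T ω s i) - τ * p := by
  refine Measurable.sub ?_ measurable_const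
  exact Finset.measurable_sum (range τ) fun s _ => meas_extend s i

lemma int_exp_Xf (hsupp : ∀ᵐ x ∂ν, ∀ i, x i ∈ Set.Icc (0 : ℝ) 1)
    (τ : ℕ) (hτT : τ ≤ T) (i : Fin K) (p : ℝ) (l : ℝ) :
    Integrable (fun ω : Fin T → Fin K → ℝ =>
        Real.exp (l * ((∑ s ∈ range τ, extendRewards T ω s i) - τ * p)))
      (Measure.pi fun _ : Fin T => ν) := by
  refine Integrable.mono' (integrable_const (Real.exp (|l| * (τ * (1 + |p|)))))
    ((Real.measurable_exp.comp ((meas_Xf τ i p).const_mul l)).aestronglyMeasurable) ?_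
  filter_upwards [hsupp_pi ν hsupp] with ω hω
  rw [Real.norm_eq_abs, abs_of_pos (Real.exp_pos _), Real.exp_le_exp]
  have hsum : |(∑ s ∈ range τ, extendRewards T ω s i) - τ * p| ≤ τ * (1 + |p|) := by
    have h1 : |∑ s ∈ range τ, extendRewards T ω s i| ≤ τ := by
      calc |∑ s ∈ range τ, extendRewards T ω s i|
          ≤ ∑ s ∈ range τ, |extendRewards T ω s i| := Finset.abs_sum_le_sum_abs _ _
        _ ≤ ∑ s ∈ range τ, 1 := by
            refine Finset.sum_le_sum fun s hs => ?_
            rw [mem_range] at hs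
            have hsT : s < T := lt_of_lt_of_le hs hτT
            have : extendRewards T ω s i = ω ⟨s, hsT⟩ i := by
              unfold extendRewards; rw [dif_pos hsT]
            rw [this, abs_le]
            exact ⟨by linarith [(hω ⟨s, hsT⟩ i).1], (hω ⟨s, hsT⟩ i).2⟩
        _ = τ := by simp
    calc |(∑ s ∈ range τ, extendRewards T ω s i) - τ * p|
        ≤ |∑ s ∈ range τ, extendRewards T ω s i| + |(τ:ℝ) * p| := abs_sub _ _
      _ ≤ τ + τ * |p| := by
          rw [abs_mul, abs_of_nonneg (by positivity : (0:ℝ) ≤ (τ:ℝ))]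
          linarith
      _ = τ * (1 + |p|) := by ring
  calc l * ((∑ s ∈ range τ, extendRewards T ω s i) - τ * p)
      ≤ |l * ((∑ s ∈ range τ, extendRewards T ω s i) - τ * p)| := le_abs_self _
    _ = |l| * |(∑ s ∈ range τ, extendRewards T ω s i) - τ * p| := abs_mul _ _
    _ ≤ |l| * (τ * (1 + |p|)) := mul_le_mul_of_nonneg_left hsum (abs_nonneg l)

lemma chernoff_upper (hsupp : ∀ᵐ x ∂ν, ∀ i, x i ∈ Set.Icc (0 : ℝ) 1)
    (τ : ℕ) (hτT : τ ≤ T) (i : Fin K) {p : ℝ} (hp : p = ∫ x, x i ∂ν)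
    {r : ℝ} (hr : 0 ≤ r) :
    ((Measure.pi fun _ : Fin T => ν)
        {ω | (τ : ℝ) * r ≤ (∑ s ∈ range τ, extendRewards T ω s i) - τ * p}).toReal
      ≤ Real.exp (-(2 * τ * r ^ 2)) := by
  have h := ProbabilityTheory.measure_ge_le_exp_mul_mgf
    (X := fun ω : Fin T → Fin K → ℝ => (∑ s ∈ range τ, extendRewards T ω s i) - τ * p)
    (μ := Measure.pi fun _ : Fin T => ν) (t := 4 * r) ((τ : ℝ) * r)
    (by positivity) (int_exp_Xf ν hsupp τ hτT i p (4 * r))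
  refine h.trans ?_
  have hmgf : ProbabilityTheory.mgf
      (fun ω : Fin T → Fin K → ℝ => (∑ s ∈ range τ, extendRewards T ω s i) - τ * p)
      (Measure.pi fun _ : Fin T => ν) (4 * r)
      ≤ Real.exp (τ * ((4 * r) ^ 2 / 8)) := mgf_prod_le ν hsupp τ hτT i hp (4 * r)
  calc Real.exp (-(4 * r) * ((τ:ℝ) * r)) * _
      ≤ Real.exp (-(4 * r) * ((τ:ℝ) * r)) * Real.exp (τ * ((4 * r) ^ 2 / 8)) :=
        mul_le_mul_of_nonneg_left hmgf (Real.exp_pos _).le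
    _ = Real.exp (-(2 * τ * r ^ 2)) := by rw [← Real.exp_add]; ring_nf

lemma chernoff_lower (hsupp : ∀ᵐ x ∂ν, ∀ i, x i ∈ Set.Icc (0 : ℝ) 1)
    (τ : ℕ) (hτT : τ ≤ T) (i : Fin K) {p : ℝ} (hp : p = ∫ x, x i ∂ν)
    {r : ℝ} (hr : 0 ≤ r) :
    ((Measure.pi fun _ : Fin T => ν)
        {ω | (∑ s ∈ range τ, extendRewards T ω s i) - τ * p ≤ -((τ : ℝ) * r)}).toReal
      ≤ Real.exp (-(2 * τ * r ^ 2)) := by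
  have h := ProbabilityTheory.measure_le_le_exp_mul_mgf
    (X := fun ω : Fin T → Fin K → ℝ => (∑ s ∈ range τ, extendRewards T ω s i) - τ * p)
    (μ := Measure.pi fun _ : Fin T => ν) (t := -(4 * r)) (-((τ : ℝ) * r))
    (by linarith : -(4*r) ≤ (0:ℝ)) (int_exp_Xf ν hsupp τ hτT i p (-(4 * r)))
  refine h.trans ?_
  have hmgf : ProbabilityTheory.mgf
      (fun ω : Fin T → Fin K → ℝ => (∑ s ∈ range τ, extendRewards T ω s i) - τ * p)
      (Measure.pi fun _ : Fin T => ν) (-(4 * r))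
      ≤ Real.exp (τ * ((-(4 * r)) ^ 2 / 8)) := mgf_prod_le ν hsupp τ hτT i hp (-(4 * r))
  calc Real.exp (-(-(4 * r)) * (-((τ:ℝ) * r))) * _
      ≤ Real.exp (-(-(4 * r)) * (-((τ:ℝ) * r))) * Real.exp (τ * ((-(4 * r)) ^ 2 / 8)) :=
        mul_le_mul_of_nonneg_left hmgf (Real.exp_pos _).le
    _ = Real.exp (-(2 * τ * r ^ 2)) := by rw [← Real.exp_add]; ring_nf

section Det
variable {K T : ℕ} [NeZero K] {X : ℕ → Fin K → ℝ} {μ : Fin K → ℝ} {iStar : Fin K}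

/-- `L` abbreviation. -/
noncomputable def elimL (K T : ℕ) : ℝ := Real.log ((K : ℝ) * (T : ℝ) ^ 2)

lemma elimRho_succ (τ : ℕ) (hτ : 1 ≤ τ) :
    elimRho K T (τ + 1) = ((Real.sqrt (elimL K T / (2 * τ)) : ℝ) : EReal) := by
  unfold elimRho elimL
  rw [if_neg (by omega)]
  congr 3
  push_cast
  ring

lemma good_star (hstar : ∀ i, μ i ≤ μ iStar)
    (hG : ∀ τ, 1 ≤ τ → τ + 1 ≤ T → ∀ i,
      |empMean X τ i - μ i| ≤ Real.sqrt (elimL K T / (2 * τ))) :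
    ∀ t, t ≤ T → iStar ∈ elimS K T X t := by
  intro t
  induction t with
  | zero => intro _; exact Finset.mem_univ _
  | succ t ih =>
    intro ht
    have ht' : t ≤ T := by omega
    rw [elimS, Finset.mem_filter]
    refine ⟨ih ht', fun j hj => ?_⟩
    rcases Nat.eq_zero_or_pos t with rfl | htpos
    · have : elimRho K T 1 = ⊤ := by unfold elimRho; rw [if_pos (by omega)]
      rw [this, show (2 : EReal) * ⊤ = ⊤ by rw [EReal.mul_top_of_pos]; norm_num]
      exact le_top
    · rw [elimRho_succ t htpos,
        show (2:EReal) = ((2:ℝ):EReal) from rfl, ← EReal.coe_mul, EReal.coe_le_coe_iff]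
      have h1 := hG t htpos ht j
      have h2 := hG t htpos ht iStar
      rw [abs_le] at h1 h2
      have := hstar j
      linarith [h1.1, h1.2, h2.1, h2.2]

lemma good_gap (hstar : ∀ i, μ i ≤ μ iStar)
    (hG : ∀ τ, 1 ≤ τ → τ + 1 ≤ T → ∀ i,
      |empMean X τ i - μ i| ≤ Real.sqrt (elimL K T / (2 * τ)))
    (t : ℕ) (ht1 : 1 ≤ t) (htT : t + 1 ≤ T) (i : Fin K) (hi : i ∈ elimS K T X (t + 1)) :
    μ iStar - μ i ≤ 4 * Real.sqrt (elimL K T / (2 * t)) := by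
  rw [elimS, Finset.mem_filter] at hi
  have hcond := hi.2 iStar (good_star hstar hG t (by omega))
  rw [elimRho_succ t ht1,
    show (2:EReal) = ((2:ℝ):EReal) from rfl, ← EReal.coe_mul, EReal.coe_le_coe_iff] at hcond
  have h1 := hG t ht1 htT i
  have h2 := hG t ht1 htT iStar
  rw [abs_le] at h1 h2
  linarith [h1.1, h1.2, h2.1, h2.2]

end Det

lemma sum_inv_sqrt (n : ℕ) :
    ∑ s ∈ Finset.Icc 1 n, (1 / Real.sqrt s) ≤ 2 * Real.sqrt n := by
  induction n with
  | zero => simp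
  | succ n ih =>
    rw [Finset.sum_Icc_succ_top (by omega : 1 ≤ n + 1)]
    have hb : (0:ℝ) < Real.sqrt (n + 1) := Real.sqrt_pos.2 (by positivity)
    have hb2 : Real.sqrt ((n:ℝ) + 1) ^ 2 = (n:ℝ) + 1 := Real.sq_sqrt (by positivity)
    have ha2 : Real.sqrt (n:ℝ) ^ 2 = (n:ℝ) := Real.sq_sqrt (by positivity)
    have ha : (0:ℝ) ≤ Real.sqrt n := Real.sqrt_nonneg _
    have key : 2 * Real.sqrt (n:ℝ) * Real.sqrt ((n:ℝ)+1) ≤ 2 * (n:ℝ) + 1 := by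
      nlinarith [sq_nonneg (Real.sqrt (n:ℝ) * Real.sqrt ((n:ℝ)+1) - ((n:ℝ) + 1/2))]
    have hstep : 1 / Real.sqrt ((n:ℕ) + 1 : ℕ) ≤ 2 * Real.sqrt ((n:ℝ)+1) - 2 * Real.sqrt (n:ℝ) := by
      rw [show (((n:ℕ) + 1 : ℕ) : ℝ) = (n:ℝ) + 1 by push_cast; ring]
      rw [div_le_iff₀ hb]
      nlinarith
    push_cast
    push_cast at hstep ih
    calc (∑ s ∈ Finset.Icc 1 n, (1 / Real.sqrt s)) + 1 / Real.sqrt ((n:ℝ)+1)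
        ≤ 2 * Real.sqrt n + (2 * Real.sqrt ((n:ℝ)+1) - 2 * Real.sqrt (n:ℝ)) :=
          add_le_add ih hstep
      _ = 2 * Real.sqrt ((n:ℝ)+1) := by ring

lemma regret_good {K T : ℕ} [NeZero K] (hT : 1 ≤ T) {X : ℕ → Fin K → ℝ}
    {μ : Fin K → ℝ} {iStar : Fin K}
    (hstar : ∀ i, μ i ≤ μ iStar) (hμ01 : ∀ i, μ i ∈ Set.Icc (0:ℝ) 1)
    (hL : 0 ≤ elimL K T)
    (hG : ∀ τ, 1 ≤ τ → τ + 1 ≤ T → ∀ i,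
      |empMean X τ i - μ i| ≤ Real.sqrt (elimL K T / (2 * τ))) :
    ∑ t ∈ Finset.Icc 1 T, (μ iStar - μ (elimI K T X t))
      ≤ 1 + 4 * Real.sqrt (2 * T * elimL K T) := by
  set L := elimL K T with hLdef
  have hsplit : Finset.Icc 1 T = insert 1 (Finset.Icc 2 T) := by
    ext t; simp only [Finset.mem_Icc, Finset.mem_insert]; omega
  rw [hsplit, Finset.sum_insert (by simp)]
  have hΔ1 : μ iStar - μ (elimI K T X 1) ≤ 1 := by
    have h1 := (hμ01 iStar).2
    have h2 := (hμ01 (elimI K T X 1)).1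
    linarith
  have hterm : ∀ t ∈ Finset.Icc 2 T,
      μ iStar - μ (elimI K T X t) ≤ 4 * Real.sqrt (L / 2) * (1 / Real.sqrt (t - 1 : ℕ)) := by
    intro t ht
    rw [Finset.mem_Icc] at ht
    obtain ⟨ht2, htT⟩ := ht
    set τ := t - 1 with hτ
    have htτ : t = τ + 1 := by omega
    have hτ1 : 1 ≤ τ := by omega
    have hτT : τ + 1 ≤ T := by omega
    have hne : (elimS K T X t).Nonempty := by
      rw [htτ]
      exact ⟨iStar, good_star hstar hG (τ+1) hτT⟩
    have hmem : elimI K T X t ∈ elimS K T X t := by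
      rw [elimI, dif_pos hne]; exact Finset.min'_mem _ _
    have hgap := good_gap hstar hG τ hτ1 hτT (elimI K T X t) (by rw [← htτ]; exact hmem)
    refine hgap.trans (le_of_eq ?_)
    rw [Real.sqrt_div hL, Real.sqrt_div hL]
    have h2τ : Real.sqrt (2 * τ) = Real.sqrt 2 * Real.sqrt τ := Real.sqrt_mul (by norm_num) _
    rw [h2τ]
    have hsτ : (0:ℝ) < Real.sqrt τ := Real.sqrt_pos.2 (by positivity)
    have hs2 : (0:ℝ) < Real.sqrt 2 := Real.sqrt_pos.2 (by norm_num)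
    field_simp
  have hsum : ∑ t ∈ Finset.Icc 2 T, (μ iStar - μ (elimI K T X t))
      ≤ 4 * Real.sqrt (L / 2) * ∑ s ∈ Finset.Icc 1 (T - 1), (1 / Real.sqrt s) := by
    calc ∑ t ∈ Finset.Icc 2 T, (μ iStar - μ (elimI K T X t))
        ≤ ∑ t ∈ Finset.Icc 2 T, 4 * Real.sqrt (L / 2) * (1 / Real.sqrt (t - 1 : ℕ)) :=
          Finset.sum_le_sum hterm
      _ = ∑ s ∈ Finset.Icc 1 (T - 1), 4 * Real.sqrt (L / 2) * (1 / Real.sqrt s) := by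
          refine Finset.sum_nbij' (fun t => t - 1) (fun s => s + 1) ?_ ?_ ?_ ?_ ?_
          · intro t ht; simp only [Finset.mem_Icc] at *; omega
          · intro s hs; simp only [Finset.mem_Icc] at *; omega
          · intro t ht; simp only [Finset.mem_Icc] at ht; show t - 1 + 1 = t; omega
          · intro s hs; simp only [Finset.mem_Icc] at hs; show s + 1 - 1 = s; omega
          · intro t ht; rfl
      _ = 4 * Real.sqrt (L / 2) * ∑ s ∈ Finset.Icc 1 (T - 1), (1 / Real.sqrt s) := by
          rw [Finset.mul_sum]
  have hfinal : 4 * Real.sqrt (L / 2) * ∑ s ∈ Finset.Icc 1 (T - 1), (1 / Real.sqrt s)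
      ≤ 4 * Real.sqrt (2 * T * L) := by
    have h1 : ∑ s ∈ Finset.Icc 1 (T - 1), (1 / Real.sqrt s) ≤ 2 * Real.sqrt (T - 1 : ℕ) :=
      sum_inv_sqrt (T - 1)
    have h2 : Real.sqrt ((T - 1 : ℕ) : ℝ) ≤ Real.sqrt (T : ℝ) :=
      Real.sqrt_le_sqrt (Nat.cast_le.2 (by omega))
    have e1 : Real.sqrt (L/2) = Real.sqrt L / Real.sqrt 2 := Real.sqrt_div hL 2
    have e2 : Real.sqrt (2 * T * L) = Real.sqrt 2 * Real.sqrt T * Real.sqrt L := by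
      rw [Real.sqrt_mul (by positivity : (0:ℝ) ≤ 2 * (T:ℝ)),
        Real.sqrt_mul (by norm_num : (0:ℝ) ≤ 2)]
    have h22 : Real.sqrt 2 * Real.sqrt 2 = 2 := Real.mul_self_sqrt (by norm_num)
    have hs2 : (0:ℝ) < Real.sqrt 2 := Real.sqrt_pos.2 (by norm_num)
    calc 4 * Real.sqrt (L / 2) * ∑ s ∈ Finset.Icc 1 (T - 1), (1 / Real.sqrt s)
        ≤ 4 * Real.sqrt (L / 2) * (2 * Real.sqrt ((T-1 : ℕ) : ℝ)) :=
          by gcongr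
      _ ≤ 4 * Real.sqrt (L / 2) * (2 * Real.sqrt (T:ℝ)) := by gcongr
      _ = 4 * Real.sqrt (2 * T * L) := by
          rw [e1, e2]
          field_simp
          nlinarith [h22, Real.sqrt_nonneg L, Real.sqrt_nonneg (T:ℝ), hs2,
            mul_nonneg (Real.sqrt_nonneg (T:ℝ)) (Real.sqrt_nonneg L)]
  calc (μ iStar - μ (elimI K T X 1)) + ∑ t ∈ Finset.Icc 2 T, (μ iStar - μ (elimI K T X t))
      ≤ 1 + 4 * Real.sqrt (2 * T * L) := add_le_add hΔ1 (hsum.trans hfinal)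

end ElimAux

/-- **Distribution independent regret bound.** For every `K ≥ 1`, `T ≥ 1` and every
probability distribution `ν` on `[0,1]^K`, the pseudo-regret of ELIM with horizon `T`
is at most `4 √(2 T ln(K T²)) + 3`. -/
theorem elim_distribution_independent_regret
    (K T : ℕ) [NeZero K] (hT : 1 ≤ T)
    (ν : Measure (Fin K → ℝ)) [IsProbabilityMeasure ν]
    (hsupp : ∀ᵐ x ∂ν, ∀ i, x i ∈ Set.Icc (0 : ℝ) 1)
    (μ : Fin K → ℝ) (hμ : ∀ i, μ i = ∫ x, x i ∂ν)
    (iStar : Fin K) (hstar : ∀ i, μ i ≤ μ iStar) :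
    (∫ ω, (∑ t ∈ Finset.Icc 1 T, (μ iStar - μ (elimI K T (extendRewards T ω) t)))
        ∂(Measure.pi fun _ : Fin T => ν))
      ≤ 4 * Real.sqrt (2 * T * Real.log ((K : ℝ) * (T : ℝ) ^ 2)) + 3 := by
  have hK : 1 ≤ K := Nat.one_le_iff_ne_zero.2 (NeZero.ne K)
  set μpi := Measure.pi fun _ : Fin T => ν with hμpi
  haveI : IsProbabilityMeasure μpi := by rw [hμpi]; infer_instance
  set L := elimL K T with hLdef
  have hL : 0 ≤ L := by
    rw [hLdef]; unfold elimL
    apply Real.log_nonneg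
    have h1 : (1:ℝ) ≤ K := by exact_mod_cast hK
    have h2 : (1:ℝ) ≤ T := by exact_mod_cast hT
    nlinarith
  have hKT2 : (0:ℝ) < (K:ℝ) * (T:ℝ)^2 := by
    have h1 : (1:ℝ) ≤ K := by exact_mod_cast hK
    have h2 : (1:ℝ) ≤ T := by exact_mod_cast hT
    nlinarith
  -- bounds on the means
  have hμ01 : ∀ i, μ i ∈ Set.Icc (0:ℝ) 1 := by
    intro i
    constructor
    · rw [hμ i]
      exact integral_nonneg_of_ae (by filter_upwards [hsupp] with x hx using (hx i).1)
    · rw [hμ i]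
      calc ∫ x, x i ∂ν ≤ ∫ _, (1:ℝ) ∂ν :=
            integral_mono_ae (integrable_eval ν hsupp i) (integrable_const 1)
              (by filter_upwards [hsupp] with x hx using (hx i).2)
        _ = 1 := by simp
  -- the good event
  set r : ℕ → ℝ := fun τ => Real.sqrt (L / (2 * τ)) with hr
  set G : Set (Fin T → Fin K → ℝ) :=
    {ω | ∀ τ, 1 ≤ τ → τ + 1 ≤ T → ∀ i,
      |empMean (extendRewards T ω) τ i - μ i| ≤ r τ} with hG
  have hempMeas : ∀ (τ : ℕ) (i : Fin K),
      Measurable fun ω : Fin T → Fin K → ℝ => empMean (extendRewards T ω) τ i := by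
    intro τ i
    unfold empMean
    exact (Finset.measurable_sum (range τ) fun s _ => meas_extend s i).div_const _
  have hGmeas : MeasurableSet G := by
    rw [hG]
    have : {ω : Fin T → Fin K → ℝ | ∀ τ, 1 ≤ τ → τ + 1 ≤ T → ∀ i,
        |empMean (extendRewards T ω) τ i - μ i| ≤ r τ}
        = ⋂ (τ : ℕ), ⋂ (_ : 1 ≤ τ), ⋂ (_ : τ + 1 ≤ T), ⋂ (i : Fin K),
          {ω | |empMean (extendRewards T ω) τ i - μ i| ≤ r τ} := by
      ext ω; simp
    rw [this]
    refine MeasurableSet.iInter fun τ => MeasurableSet.iInter fun _ =>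
      MeasurableSet.iInter fun _ => MeasurableSet.iInter fun i => ?_
    exact measurableSet_le (((hempMeas τ i).sub measurable_const).abs) measurable_const
  -- deviation sets
  set Bp : ℕ → Fin K → Set (Fin T → Fin K → ℝ) := fun τ i =>
    {ω | (τ : ℝ) * r τ ≤ (∑ s ∈ range τ, extendRewards T ω s i) - τ * μ i} with hBp
  set Bm : ℕ → Fin K → Set (Fin T → Fin K → ℝ) := fun τ i =>
    {ω | (∑ s ∈ range τ, extendRewards T ω s i) - τ * μ i ≤ -((τ : ℝ) * r τ)} with hBm
  -- inclusion of the bad event in the union of deviation sets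
  have hincl : Gᶜ ⊆ ⋃ τ ∈ Finset.Icc 1 (T - 1), ⋃ i ∈ (Finset.univ : Finset (Fin K)),
      (Bp τ i ∪ Bm τ i) := by
    intro ω hω
    simp only [hG, Set.mem_compl_iff, Set.mem_setOf_eq, not_forall, not_le] at hω
    obtain ⟨τ, hτ1, hτT, i, hlt⟩ := hω
    have hτ0 : (0:ℝ) < (τ:ℝ) := by exact_mod_cast hτ1
    have hrnn : 0 ≤ r τ := Real.sqrt_nonneg _
    have hsum : (∑ s ∈ range τ, extendRewards T ω s i)
        = empMean (extendRewards T ω) τ i * τ := by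
      unfold empMean
      field_simp
    refine Set.mem_iUnion₂.2 ⟨τ, by rw [Finset.mem_Icc]; omega, ?_⟩
    refine Set.mem_iUnion₂.2 ⟨i, Finset.mem_univ i, ?_⟩
    rcases lt_abs.1 hlt with h | h
    · refine Set.mem_union_left _ ?_
      rw [hBp]
      show (τ : ℝ) * r τ ≤ (∑ s ∈ range τ, extendRewards T ω s i) - τ * μ i
      rw [hsum]
      have := mul_le_mul_of_nonneg_left h.le hτ0.le
      nlinarith
    · refine Set.mem_union_right _ ?_
      rw [hBm]
      show (∑ s ∈ range τ, extendRewards T ω s i) - τ * μ i ≤ -((τ : ℝ) * r τ)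
      rw [hsum]
      have := mul_le_mul_of_nonneg_left h.le hτ0.le
      nlinarith
  -- measure of each deviation set
  have hBbound : ∀ τ, 1 ≤ τ → τ ≤ T → ∀ i : Fin K,
      μpi (Bp τ i) ≤ ENNReal.ofReal (((K:ℝ) * (T:ℝ)^2)⁻¹)
        ∧ μpi (Bm τ i) ≤ ENNReal.ofReal (((K:ℝ) * (T:ℝ)^2)⁻¹) := by
    intro τ hτ1 hτT i
    have hτ0 : (0:ℝ) < (τ:ℝ) := by exact_mod_cast hτ1
    have hexp : Real.exp (-(2 * τ * (r τ) ^ 2)) = ((K:ℝ) * (T:ℝ)^2)⁻¹ := by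
      rw [hr]
      rw [Real.sq_sqrt (by positivity : (0:ℝ) ≤ L / (2 * τ))]
      have harg : 2 * (τ:ℝ) * (L / (2 * τ)) = L := by field_simp
      rw [harg, hLdef]
      unfold elimL
      rw [Real.exp_neg, Real.exp_log hKT2]
    have hrnn : 0 ≤ r τ := Real.sqrt_nonneg _
    have hup := chernoff_upper ν hsupp τ hτT i (hμ i) hrnn
    have hlo := chernoff_lower ν hsupp τ hτT i (hμ i) hrnn
    rw [hexp] at hup hlo
    constructor
    · rw [← ENNReal.ofReal_toReal (measure_ne_top μpi (Bp τ i))]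
      exact ENNReal.ofReal_le_ofReal hup
    · rw [← ENNReal.ofReal_toReal (measure_ne_top μpi (Bm τ i))]
      exact ENNReal.ofReal_le_ofReal hlo
  -- union bound
  set c : ENNReal := ENNReal.ofReal (((K:ℝ) * (T:ℝ)^2)⁻¹) with hc
  have hGc : μpi Gᶜ ≤ ((T - 1 : ℕ) : ENNReal) * ((K : ENNReal) * (2 * c)) := by
    calc μpi Gᶜ ≤ μpi (⋃ τ ∈ Finset.Icc 1 (T - 1), ⋃ i ∈ (Finset.univ : Finset (Fin K)),
          (Bp τ i ∪ Bm τ i)) := measure_mono hincl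
      _ ≤ ∑ τ ∈ Finset.Icc 1 (T - 1), μpi (⋃ i ∈ (Finset.univ : Finset (Fin K)),
          (Bp τ i ∪ Bm τ i)) := measure_biUnion_finset_le _ _
      _ ≤ ∑ τ ∈ Finset.Icc 1 (T - 1), ∑ i ∈ (Finset.univ : Finset (Fin K)),
          μpi (Bp τ i ∪ Bm τ i) :=
          Finset.sum_le_sum fun τ _ => measure_biUnion_finset_le _ _
      _ ≤ ∑ τ ∈ Finset.Icc 1 (T - 1), ∑ i ∈ (Finset.univ : Finset (Fin K)), (2 * c) := by
          refine Finset.sum_le_sum fun τ hτ => Finset.sum_le_sum fun i _ => ?_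
          rw [Finset.mem_Icc] at hτ
          have hb := hBbound τ hτ.1 (by omega) i
          calc μpi (Bp τ i ∪ Bm τ i) ≤ μpi (Bp τ i) + μpi (Bm τ i) := measure_union_le _ _
            _ ≤ c + c := add_le_add hb.1 hb.2
            _ = 2 * c := (two_mul c).symm
      _ = ((T - 1 : ℕ) : ENNReal) * ((K : ENNReal) * (2 * c)) := by
          rw [Finset.sum_const, Finset.sum_const, Nat.card_Icc, Finset.card_univ,
            Fintype.card_fin, nsmul_eq_mul, nsmul_eq_mul]
          norm_num
  have hGcreal : (T : ℝ) * (μpi Gᶜ).toReal ≤ 2 := by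
    have hne : (((T - 1 : ℕ) : ENNReal) * ((K : ENNReal) * (2 * c))) ≠ ⊤ := by
      rw [hc]
      exact ENNReal.mul_ne_top (ENNReal.natCast_ne_top _)
        (ENNReal.mul_ne_top (ENNReal.natCast_ne_top _)
          (ENNReal.mul_ne_top (by norm_num) ENNReal.ofReal_ne_top))
    have h1 : (μpi Gᶜ).toReal ≤ ((T - 1 : ℕ) : ℝ) * ((K : ℝ) * (2 * ((K:ℝ) * (T:ℝ)^2)⁻¹)) := by
      have := ENNReal.toReal_mono hne hGc
      rw [ENNReal.toReal_mul, ENNReal.toReal_mul, ENNReal.toReal_mul, hc,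
        ENNReal.toReal_ofReal (by positivity), ENNReal.toReal_natCast,
        ENNReal.toReal_natCast, ENNReal.toReal_ofNat] at this
      exact this
    have h2 : (0:ℝ) ≤ (μpi Gᶜ).toReal := ENNReal.toReal_nonneg
    have hTR : (1:ℝ) ≤ (T:ℝ) := by exact_mod_cast hT
    have hKR : (1:ℝ) ≤ (K:ℝ) := by exact_mod_cast hK
    have hT1 : ((T - 1 : ℕ) : ℝ) = (T:ℝ) - 1 := by
      push_cast [Nat.cast_sub hT]
      ring
    have h3 : (T : ℝ) * (μpi Gᶜ).toReal
        ≤ (T : ℝ) * (((T:ℝ) - 1) * ((K : ℝ) * (2 * ((K:ℝ) * (T:ℝ)^2)⁻¹))) := by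
      rw [← hT1]
      exact mul_le_mul_of_nonneg_left h1 (by positivity)
    refine h3.trans ?_
    have hKne : (K:ℝ) ≠ 0 := by positivity
    have hTne : (T:ℝ) ≠ 0 := by positivity
    have heq : (T:ℝ) * (((T:ℝ) - 1) * ((K:ℝ) * (2 * ((K:ℝ) * (T:ℝ)^2)⁻¹)))
        = 2 * ((T:ℝ) - 1) / (T:ℝ) := by
      field_simp
    rw [heq, div_le_iff₀ (by positivity : (0:ℝ) < (T:ℝ))]
    nlinarith
  -- final integral comparison
  set f : (Fin T → Fin K → ℝ) → ℝ := fun ω =>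
    ∑ t ∈ Finset.Icc 1 T, (μ iStar - μ (elimI K T (extendRewards T ω) t)) with hf
  set C : ℝ := 1 + 4 * Real.sqrt (2 * T * L) with hC
  have hCnn : 0 ≤ C := by
    rw [hC]
    have := Real.sqrt_nonneg (2 * (T:ℝ) * L)
    linarith
  have hnn : ∀ ω, 0 ≤ f ω := fun ω =>
    Finset.sum_nonneg fun t _ => by linarith [hstar (elimI K T (extendRewards T ω) t)]
  have hbad : ∀ ω, f ω ≤ (T : ℝ) := by
    intro ω
    calc f ω ≤ ∑ t ∈ Finset.Icc 1 T, (1:ℝ) := by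
          refine Finset.sum_le_sum fun t _ => ?_
          have h1 := (hμ01 iStar).2
          have h2 := (hμ01 (elimI K T (extendRewards T ω) t)).1
          linarith
      _ = (T : ℝ) := by
          rw [Finset.sum_const, Nat.card_Icc, nsmul_eq_mul, mul_one]
          norm_num
  have hgood : ∀ ω ∈ G, f ω ≤ C := by
    intro ω hω
    rw [hC, hf]
    refine regret_good hT hstar hμ01 ?_ ?_
    · exact hL
    · intro τ h1 h2 i
      exact hω τ h1 h2 i
  set g : (Fin T → Fin K → ℝ) → ℝ := fun ω => C + Gᶜ.indicator (fun _ => (T:ℝ)) ω with hg2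
  have hfg : ∀ ω, f ω ≤ g ω := by
    intro ω
    show f ω ≤ C + Gᶜ.indicator (fun _ => (T:ℝ)) ω
    by_cases hω : ω ∈ G
    · rw [Set.indicator_of_notMem (by simpa using hω)]
      simpa using hgood ω hω
    · rw [Set.indicator_of_mem (by simpa using hω)]
      have := hbad ω
      linarith
  have hgint : Integrable g μpi :=
    (integrable_const C).add ((integrable_const (T:ℝ)).indicator hGmeas.compl)
  have hint : ∫ ω, f ω ∂μpi ≤ ∫ ω, g ω ∂μpi :=
    integral_mono_of_nonneg (Filter.Eventually.of_forall hnn) hgint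
      (Filter.Eventually.of_forall hfg)
  have hgval : ∫ ω, g ω ∂μpi = C + (μpi Gᶜ).toReal * (T:ℝ) := by
    rw [hg2]
    rw [integral_add (integrable_const C) ((integrable_const (T:ℝ)).indicator hGmeas.compl)]
    rw [integral_const, integral_indicator_const (T:ℝ) hGmeas.compl]
    simp [smul_eq_mul, Measure.real]
  have hfinal : ∫ ω, f ω ∂μpi ≤ C + 2 := by
    refine hint.trans ?_
    rw [hgval]
    have : (μpi Gᶜ).toReal * (T:ℝ) ≤ 2 := by
      rw [mul_comm]
      exact hGcreal
    linarith
  have hLgoal : L = Real.log ((K : ℝ) * (T : ℝ) ^ 2) := by rw [hLdef]; rfl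
  calc (∫ ω, (∑ t ∈ Finset.Icc 1 T, (μ iStar - μ (elimI K T (extendRewards T ω) t))) ∂μpi)
      = ∫ ω, f ω ∂μpi := rfl
    _ ≤ C + 2 := hfinal
    _ = 4 * Real.sqrt (2 * T * Real.log ((K : ℝ) * (T : ℝ) ^ 2)) + 3 := by
        rw [hC, hLgoal]; ring
end

section
/- Distribution-dependent regret bound for ELIM: suppose the best arm i* satisfies i* ≥ 2 and is unique (μ_{i*} > μ_i for all i ≠ i*). Let Δ_{(1)} ≥ Δ_{(2)} ≥ … ≥ Δ_{(i*)} = 0 be the decreasing rearrangement of the multiset {Δ_i : 1 ≤ i ≤ i*}, and let C = 8·ln(K·T²). Then the pseudo-regret of ELIM with horizon T satisfies R(T) ≤ Δ_{(1)} + C/Δ_{(1)} + C·∑_{i=2}^{i*−1} (1/Δ_{(i)}² − 1/Δ_{(i−1)}²)·Δ_{(i)} + 2. -/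
open MeasureTheory Finset

section ElimAux
open Real

lemma elim_den_pos {p : ℝ} (hp0 : 0 ≤ p) (hp1 : p ≤ 1) (l : ℝ) :
    0 < 1 - p + p * exp l := by
  nlinarith [exp_pos l, mul_nonneg hp0 (exp_pos l).le]

lemma elim_hoeffding_log {p : ℝ} (hp0 : 0 ≤ p) (hp1 : p ≤ 1) (l : ℝ) :
    Real.log (1 - p + p * exp l) ≤ l * p + l ^ 2 / 8 := by
  set den : ℝ → ℝ := fun x => 1 - p + p * exp x with hden_def
  have hden : ∀ x, 0 < den x := fun x => elim_den_pos hp0 hp1 x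
  set h : ℝ → ℝ := fun x => x * p + x ^ 2 / 8 - Real.log (den x) with hh_def
  set φ : ℝ → ℝ := fun x => p + x / 4 - p * exp x / den x with hφ_def
  have hdenD : ∀ x, HasDerivAt den (p * exp x) x := by
    intro x
    exact ((Real.hasDerivAt_exp x).const_mul p).const_add (1 - p)
  have hhD : ∀ x, HasDerivAt h (φ x) x := by
    intro x
    have h1 : HasDerivAt (fun x : ℝ => x * p + x ^ 2 / 8) (p + x / 4) x := by
      have := ((hasDerivAt_id x).mul_const p).add ((hasDerivAt_pow 2 x).div_const 8)
      refine this.congr_deriv ?_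
      show (1:ℝ) * p + ((2:ℕ):ℝ) * x ^ 1 / 8 = p + x / 4
      push_cast
      ring
    have h2 : HasDerivAt (fun x => Real.log (den x)) (p * exp x / den x) x :=
      (hdenD x).log (hden x).ne'
    exact h1.sub h2
  have hφD : ∀ x, HasDerivAt φ
      (1 / 4 - (p * exp x * den x - p * exp x * (p * exp x)) / (den x) ^ 2) x := by
    intro x
    have h1 : HasDerivAt (fun x : ℝ => p + x / 4) (1 / 4) x := by
      simpa using ((hasDerivAt_id x).div_const 4).const_add p
    have h2 : HasDerivAt (fun x => p * exp x / den x)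
        ((p * exp x * den x - p * exp x * (p * exp x)) / (den x) ^ 2) x :=
      HasDerivAt.div ((Real.hasDerivAt_exp x).const_mul p) (hdenD x) (hden x).ne'
    exact h1.sub h2
  have hφ'nonneg : ∀ x, 0 ≤ 1 / 4 - (p * exp x * den x - p * exp x * (p * exp x)) / (den x) ^ 2 := by
    intro x
    rw [sub_nonneg, div_le_iff₀ (pow_pos (hden x) 2)]
    have hd : den x = 1 - p + p * exp x := rfl
    nlinarith [sq_nonneg ((1 - p) - p * exp x), exp_pos x, mul_nonneg hp0 (exp_pos x).le]
  have hφmono : Monotone φ := by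
    apply monotone_of_deriv_nonneg
    · exact fun x => (hφD x).differentiableAt
    · intro x
      rw [(hφD x).deriv]
      exact hφ'nonneg x
  have hφ0 : φ 0 = 0 := by
    simp [hφ_def, hden_def]
  have hh0 : h 0 = 0 := by
    simp [hh_def, hden_def]
  have hdiff : Differentiable ℝ h := fun x => (hhD x).differentiableAt
  have hhnonneg : ∀ x, 0 ≤ h x := by
    intro x
    rcases le_total 0 x with hx | hx
    · have hmono : MonotoneOn h (Set.Ici 0) := by
        apply monotoneOn_of_deriv_nonneg (convex_Ici 0) hdiff.continuous.continuousOn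
          hdiff.differentiableOn
        intro y hy
        rw [(hhD y).deriv]
        have hy0 : (0:ℝ) ≤ y := le_of_lt (by simpa using hy)
        have := hφmono hy0
        rwa [hφ0] at this
      have := hmono Set.self_mem_Ici (Set.mem_Ici.2 hx) hx
      rwa [hh0] at this
    · have hanti : AntitoneOn h (Set.Iic 0) := by
        apply antitoneOn_of_deriv_nonpos (convex_Iic 0) hdiff.continuous.continuousOn
          hdiff.differentiableOn
        intro y hy
        rw [(hhD y).deriv]
        have hy0 : y ≤ (0:ℝ) := le_of_lt (by simpa using hy)
        have := hφmono hy0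
        rwa [hφ0] at this
      have := hanti (Set.mem_Iic.2 hx) Set.self_mem_Iic hx
      rwa [hh0] at this
  have h1 := hhnonneg l
  simp only [hh_def] at h1
  linarith

open MeasureTheory

variable {α : Type*} [MeasurableSpace α]

lemma elim_mean_mem {m : Measure α} [IsProbabilityMeasure m] {h : α → ℝ}
    (hm : Measurable h) (hb : ∀ᵐ x ∂m, h x ∈ Set.Icc (0:ℝ) 1) :
    Integrable h m ∧ (∫ x, h x ∂m) ∈ Set.Icc (0:ℝ) 1 := by
  have hint : Integrable h m := by
    refine Integrable.mono' (integrable_const 1) hm.aestronglyMeasurable ?_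
    filter_upwards [hb] with x hx
    rw [Real.norm_eq_abs, abs_le]; exact ⟨by linarith [hx.1], hx.2⟩
  refine ⟨hint, ?_, ?_⟩
  · exact integral_nonneg_of_ae (hb.mono fun x hx => hx.1)
  · calc ∫ x, h x ∂m ≤ ∫ _, (1:ℝ) ∂m :=
        integral_mono_ae hint (integrable_const 1) (hb.mono fun x hx => hx.2)
    _ = 1 := by simp

lemma elim_mgf_le {m : Measure α} [IsProbabilityMeasure m] {h : α → ℝ}
    (hm : Measurable h) (hb : ∀ᵐ x ∂m, h x ∈ Set.Icc (0:ℝ) 1) (l : ℝ) :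
    ∫ x, exp (l * (h x - ∫ y, h y ∂m)) ∂m ≤ exp (l ^ 2 / 8) := by
  obtain ⟨hint, hp0, hp1⟩ := elim_mean_mem hm hb
  set p := ∫ y, h y ∂m with hp_def
  set e1 := exp (l * (0 - p)) with he1
  set e2 := exp (l * (1 - p)) with he2
  have key : ∀ᵐ x ∂m, exp (l * (h x - p)) ≤ e1 + h x * (e2 - e1) := by
    filter_upwards [hb] with x hx
    have hconv := convexOn_exp.2 (Set.mem_univ (l * (0 - p))) (Set.mem_univ (l * (1 - p)))
      (by linarith [hx.2] : (0:ℝ) ≤ 1 - h x) hx.1 (by ring)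
    simp only [smul_eq_mul] at hconv
    have harg : (1 - h x) * (l * (0 - p)) + h x * (l * (1 - p)) = l * (h x - p) := by ring
    rw [harg] at hconv
    calc exp (l * (h x - p)) ≤ (1 - h x) * e1 + h x * e2 := hconv
    _ = e1 + h x * (e2 - e1) := by ring
  have hintL : Integrable (fun x => exp (l * (h x - p))) m := by
    refine Integrable.mono' (integrable_const (exp |l|)) ?_ ?_
    · exact (Real.measurable_exp.comp ((hm.sub measurable_const).const_mul l)).aestronglyMeasurable
    · filter_upwards [hb] with x hx
      rw [Real.norm_eq_abs, abs_of_pos (exp_pos _), exp_le_exp]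
      have h1 : |h x - p| ≤ 1 := by
        rw [abs_le]; constructor <;> nlinarith [hx.1, hx.2]
      calc l * (h x - p) ≤ |l * (h x - p)| := le_abs_self _
      _ = |l| * |h x - p| := abs_mul _ _
      _ ≤ |l| * 1 := by nlinarith [abs_nonneg l]
      _ = |l| := mul_one _
  have hintR : Integrable (fun x => e1 + h x * (e2 - e1)) m :=
    (integrable_const e1).add (hint.mul_const (e2 - e1))
  calc ∫ x, exp (l * (h x - p)) ∂m ≤ ∫ x, e1 + h x * (e2 - e1) ∂m :=
      integral_mono_ae hintL hintR key
  _ = e1 + p * (e2 - e1) := by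
      rw [integral_add (integrable_const e1) (hint.mul_const _), integral_const,
        integral_mul_const]
      simp [hp_def]
  _ ≤ exp (l ^ 2 / 8) := by
      have hee : e1 + p * (e2 - e1) = exp (-(l * p)) * (1 - p + p * exp l) := by
        rw [he1, he2]
        rw [show l * (0 - p) = -(l*p) by ring, show l * (1 - p) = l + -(l*p) by ring, exp_add]
        ring
      rw [hee]
      have hlog := elim_hoeffding_log hp0 hp1 l
      have hpos := elim_den_pos hp0 hp1 l
      calc exp (-(l * p)) * (1 - p + p * exp l)
          = exp (-(l * p)) * exp (Real.log (1 - p + p * exp l)) := by rw [exp_log hpos]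
      _ = exp (-(l * p) + Real.log (1 - p + p * exp l)) := (exp_add _ _).symm
      _ ≤ exp (l ^ 2 / 8) := by
          rw [exp_le_exp]; linarith

open Finset


/-- Chernoff bound over the product measure. -/
lemma elim_chernoff {K T : ℕ} (ν : Measure (Fin K → ℝ)) [IsProbabilityMeasure ν]
    (h : (Fin K → ℝ) → ℝ) (hm : Measurable h) (hb : ∀ᵐ x ∂ν, h x ∈ Set.Icc (0:ℝ) 1)
    (s : ℕ) (hs1 : 1 ≤ s) (hsT : s ≤ T) (ρ : ℝ) (hρ : 0 ≤ ρ) :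
    (Measure.pi fun _ : Fin T => ν)
      {ω | (s:ℝ) * ρ ≤ ∑ k ∈ Finset.range s, (h (extendRewards T ω k) - ∫ y, h y ∂ν)}
      ≤ ENNReal.ofReal (exp (-(2 * s * ρ ^ 2))) := by
  letI : MeasureSpace (Fin K → ℝ) := ⟨ν⟩
  haveI hsf : SigmaFinite (volume : Measure (Fin K → ℝ)) :=
    (inferInstance : SigmaFinite ν)
  set μ0 := ∫ y, h y ∂ν with hμ0
  set P := Measure.pi fun _ : Fin T => ν with hP
  have hvol : (volume : Measure (Fin T → Fin K → ℝ)) = P := volume_pi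
  set X : (Fin T → Fin K → ℝ) → ℝ :=
    fun ω => ∑ k ∈ Finset.range s, (h (extendRewards T ω k) - μ0) with hX
  set F : Fin T → (Fin K → ℝ) → ℝ :=
    fun u x => if (u : ℕ) < s then exp (4 * ρ * (h x - μ0)) else 1 with hF
  have hfilter : (Finset.range T).filter (fun k => k < s) = Finset.range s := by
    ext k; simp only [Finset.mem_filter, Finset.mem_range]; omega
  have hXsum : ∀ ω : Fin T → Fin K → ℝ,
      X ω = ∑ u : Fin T, (if (u : ℕ) < s then h (ω u) - μ0 else 0) := by
    intro ω
    have h2 : ∑ u : Fin T, (if (u : ℕ) < s then h (extendRewards T ω u) - μ0 else 0)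
        = ∑ k ∈ Finset.range T, (if k < s then h (extendRewards T ω k) - μ0 else 0) := by
      simpa using Fin.sum_univ_eq_sum_range
        (fun k => if k < s then h (extendRewards T ω k) - μ0 else 0) T
    calc X ω = ∑ k ∈ (Finset.range T).filter (fun k => k < s),
          (h (extendRewards T ω k) - μ0) := by rw [hfilter]
    _ = ∑ k ∈ Finset.range T, (if k < s then h (extendRewards T ω k) - μ0 else 0) :=
        Finset.sum_filter _ _
    _ = ∑ u : Fin T, (if (u : ℕ) < s then h (ω u) - μ0 else 0) := by
        rw [← h2]
        refine Finset.sum_congr rfl fun u _ => ?_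
        simp [extendRewards, u.isLt]
  have hkey : ∀ ω : Fin T → Fin K → ℝ, exp (4 * ρ * X ω) = ∏ u : Fin T, F u (ω u) := by
    intro ω
    rw [hXsum ω, Finset.mul_sum, Real.exp_sum]
    refine Finset.prod_congr rfl fun u _ => ?_
    by_cases hu : (u : ℕ) < s <;> simp [hF, hu]
  have hFm : ∀ u : Fin T, Integrable (F u) ν := by
    intro u
    by_cases hu : (u : ℕ) < s
    · simp only [hF, hu, if_true]
      refine Integrable.mono' (integrable_const (exp (4 * ρ))) ?_ ?_
      · exact (Real.measurable_exp.comp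
          ((hm.sub measurable_const).const_mul (4 * ρ))).aestronglyMeasurable
      · obtain ⟨-, hp0, hp1⟩ := elim_mean_mem hm hb
        filter_upwards [hb] with x hx
        rw [Real.norm_eq_abs, abs_of_pos (exp_pos _), exp_le_exp]
        nlinarith [hx.1, hx.2]
    · simp only [hF, hu, if_false]
      exact integrable_const 1
  have hint : Integrable (fun ω => exp (4 * ρ * X ω)) P := by
    rw [← hvol]
    have : Integrable (fun ω : Fin T → Fin K → ℝ => ∏ u : Fin T, F u (ω u)) volume := by
      apply Integrable.fintype_prod (f := F)
      intro u
      exact hFm u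
    exact this.congr (Filter.Eventually.of_forall fun ω => (hkey ω).symm)
  have hmgf : ProbabilityTheory.mgf X P (4 * ρ) ≤ exp (2 * (s:ℝ) * ρ ^ 2) := by
    have h1 : ProbabilityTheory.mgf X P (4 * ρ) = ∏ u : Fin T, ∫ x, F u x ∂ν := by
      rw [ProbabilityTheory.mgf, ← hvol]
      calc ∫ ω, exp (4 * ρ * X ω) = ∫ ω : Fin T → Fin K → ℝ, ∏ u : Fin T, F u (ω u) :=
          integral_congr_ae (Filter.Eventually.of_forall fun ω => hkey ω)
      _ = ∏ u : Fin T, ∫ x, F u x := MeasureTheory.integral_fintype_prod_volume_eq_prod F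
    rw [h1]
    calc ∏ u : Fin T, ∫ x, F u x ∂ν
        ≤ ∏ u : Fin T, (if (u : ℕ) < s then exp (2 * ρ ^ 2) else 1) := by
          refine Finset.prod_le_prod (fun u _ => ?_) (fun u _ => ?_)
          · refine integral_nonneg fun x => ?_
            by_cases hu : (u : ℕ) < s <;> simp [hF, hu, (exp_pos _).le]
          · by_cases hu : (u : ℕ) < s
            · simp only [hF, hu, if_true]
              have := elim_mgf_le hm hb (4 * ρ)
              rwa [show (4 * ρ) ^ 2 / 8 = 2 * ρ ^ 2 by ring, ← hμ0] at this
            · simp [hF, hu]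
    _ = exp (2 * (s:ℝ) * ρ ^ 2) := by
          calc ∏ u : Fin T, (if (u : ℕ) < s then exp (2 * ρ ^ 2) else 1)
              = ∏ u : Fin T, exp (if (u : ℕ) < s then 2 * ρ ^ 2 else 0) := by
                refine Finset.prod_congr rfl fun u _ => ?_
                by_cases hu : (u : ℕ) < s <;> simp [hu]
          _ = exp (∑ u : Fin T, (if (u : ℕ) < s then 2 * ρ ^ 2 else 0)) :=
                (Real.exp_sum _ _).symm
          _ = exp (2 * (s:ℝ) * ρ ^ 2) := by
                congr 1
                have h3 : ∑ u : Fin T, (if (u : ℕ) < s then 2 * ρ ^ 2 else 0)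
                    = ∑ k ∈ Finset.range T, (if k < s then 2 * ρ ^ 2 else 0) := by
                  simpa using Fin.sum_univ_eq_sum_range
                    (fun k => if k < s then 2 * ρ ^ 2 else 0) T
                rw [h3, ← Finset.sum_filter, hfilter, Finset.sum_const, Finset.card_range,
                  nsmul_eq_mul]
                ring
  have hprob : IsProbabilityMeasure P := by
    rw [hP]; infer_instance
  have hfin := ProbabilityTheory.measure_ge_le_exp_mul_mgf (μ := P) (X := X) ((s:ℝ) * ρ)
    (by positivity : (0:ℝ) ≤ 4 * ρ) hint
  have hfin2 : (P {ω | (s:ℝ) * ρ ≤ X ω}).toReal ≤ exp (-(2 * s * ρ ^ 2)) := by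
    refine hfin.trans ?_
    calc exp (-(4 * ρ) * ((s:ℝ) * ρ)) * ProbabilityTheory.mgf X P (4 * ρ)
        ≤ exp (-(4 * ρ) * ((s:ℝ) * ρ)) * exp (2 * (s:ℝ) * ρ ^ 2) := by
          exact mul_le_mul_of_nonneg_left hmgf (exp_pos _).le
    _ = exp (-(2 * s * ρ ^ 2)) := by
          rw [← exp_add]; congr 1; ring
  rw [ENNReal.le_ofReal_iff_toReal_le (measure_ne_top P _) (exp_pos _).le]
  exact hfin2

section Meas

variable {K T : ℕ}

lemma elim_empMean_measurable (t : ℕ) (i : Fin K) :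
    Measurable (fun ω : Fin T → Fin K → ℝ => empMean (extendRewards T ω) t i) := by
  unfold empMean
  apply Measurable.div_const
  apply Finset.measurable_sum
  intro s _
  unfold extendRewards
  by_cases hs : s < T
  · simp only [hs, dif_pos]
    exact (measurable_pi_apply i).comp (measurable_pi_apply (⟨s, hs⟩ : Fin T))
  · simp only [hs, dif_neg, not_false_iff]
    exact measurable_const

open scoped Classical in
lemma elim_cond_measurable (t : ℕ) (B : Finset (Fin K)) (i : Fin K) :
    MeasurableSet {ω : Fin T → Fin K → ℝ | ∀ j ∈ B,
      ((empMean (extendRewards T ω) t j - empMean (extendRewards T ω) t i : ℝ) : EReal)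
        ≤ 2 * elimRho K T (t + 1)} := by
  have : {ω : Fin T → Fin K → ℝ | ∀ j ∈ B,
      ((empMean (extendRewards T ω) t j - empMean (extendRewards T ω) t i : ℝ) : EReal)
        ≤ 2 * elimRho K T (t + 1)}
      = ⋂ j ∈ B, {ω : Fin T → Fin K → ℝ |
      ((empMean (extendRewards T ω) t j - empMean (extendRewards T ω) t i : ℝ) : EReal)
        ≤ 2 * elimRho K T (t + 1)} := by
    ext ω; simp
  rw [this]
  refine MeasurableSet.biInter (Set.to_countable _) fun j _ => ?_
  have hf : Measurable (fun ω : Fin T → Fin K → ℝ =>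
      ((empMean (extendRewards T ω) t j - empMean (extendRewards T ω) t i : ℝ) : EReal)) :=
    measurable_coe_real_ereal.comp
      ((elim_empMean_measurable t j).sub (elim_empMean_measurable t i))
  exact hf measurableSet_Iic

open scoped Classical in
lemma elim_elimS_measurable (t : ℕ) (A : Finset (Fin K)) :
    MeasurableSet {ω : Fin T → Fin K → ℝ | elimS K T (extendRewards T ω) t = A} := by
  induction t generalizing A with
  | zero =>
    by_cases hA : A = Finset.univ
    · have : {ω : Fin T → Fin K → ℝ | elimS K T (extendRewards T ω) 0 = A} = Set.univ := by
        ext ω; simp [elimS, hA]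
      rw [this]; exact MeasurableSet.univ
    · have : {ω : Fin T → Fin K → ℝ | elimS K T (extendRewards T ω) 0 = A} = ∅ := by
        ext ω; simp [elimS, Ne.symm hA]
      rw [this]; exact MeasurableSet.empty
  | succ t ih =>
    have hrw : {ω : Fin T → Fin K → ℝ | elimS K T (extendRewards T ω) (t+1) = A}
        = ⋃ B : Finset (Fin K), ({ω : Fin T → Fin K → ℝ | elimS K T (extendRewards T ω) t = B}
          ∩ {ω : Fin T → Fin K → ℝ | B.filter (fun i => ∀ j ∈ B,
            ((empMean (extendRewards T ω) t j - empMean (extendRewards T ω) t i : ℝ) : EReal)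
              ≤ 2 * elimRho K T (t + 1)) = A}) := by
      ext ω
      simp only [Set.mem_iUnion, Set.mem_inter_iff, Set.mem_setOf_eq]
      constructor
      · intro hω
        refine ⟨elimS K T (extendRewards T ω) t, rfl, ?_⟩
        rw [← hω]
        rfl
      · rintro ⟨B, hB, hfil⟩
        rw [show elimS K T (extendRewards T ω) (t+1)
          = (elimS K T (extendRewards T ω) t).filter (fun i => ∀ j ∈ elimS K T (extendRewards T ω) t,
            ((empMean (extendRewards T ω) t j - empMean (extendRewards T ω) t i : ℝ) : EReal)
              ≤ 2 * elimRho K T (t + 1)) from rfl]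
        rw [← hfil]
        subst hB
        rfl
    rw [hrw]
    refine MeasurableSet.iUnion fun B => (ih B).inter ?_
    have hrw2 : {ω : Fin T → Fin K → ℝ | B.filter (fun i => ∀ j ∈ B,
          ((empMean (extendRewards T ω) t j - empMean (extendRewards T ω) t i : ℝ) : EReal)
            ≤ 2 * elimRho K T (t + 1)) = A}
        = ⋂ i : Fin K, {ω : Fin T → Fin K → ℝ |
            ((i ∈ B ∧ ∀ j ∈ B,
              ((empMean (extendRewards T ω) t j - empMean (extendRewards T ω) t i : ℝ) : EReal)
                ≤ 2 * elimRho K T (t + 1)) ↔ i ∈ A)} := by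
      ext ω
      simp only [Set.mem_setOf_eq, Set.mem_iInter, Finset.ext_iff, Finset.mem_filter]
    rw [hrw2]
    refine MeasurableSet.iInter fun i => ?_
    by_cases hiB : i ∈ B <;> by_cases hiA : i ∈ A
    · simp only [hiB, hiA, true_and, iff_true]
      exact elim_cond_measurable t B i
    · simp only [hiB, hiA, true_and, iff_false]
      exact (elim_cond_measurable t B i).compl
    · simp only [hiB, hiA, false_and, false_iff, iff_true]
      simp only [Set.setOf_false]
      exact MeasurableSet.empty
    · simp only [hiB, hiA, false_and, false_iff, iff_false, not_false_iff]
      simp only [Set.setOf_true]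
      exact MeasurableSet.univ

lemma elim_elimI_measurable [NeZero K] (t : ℕ) :
    Measurable (fun ω : Fin T → Fin K → ℝ => elimI K T (extendRewards T ω) t) := by
  apply measurable_to_countable'
  intro a
  have : (fun ω : Fin T → Fin K → ℝ => elimI K T (extendRewards T ω) t) ⁻¹' {a}
      = ⋃ B : Finset (Fin K), ({ω : Fin T → Fin K → ℝ | elimS K T (extendRewards T ω) t = B}
        ∩ (if (if h : B.Nonempty then B.min' h else 0) = a then Set.univ else ∅)) := by
    ext ω
    simp only [Set.mem_preimage, Set.mem_singleton_iff, Set.mem_iUnion, Set.mem_inter_iff,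
      Set.mem_setOf_eq]
    constructor
    · intro hω
      refine ⟨elimS K T (extendRewards T ω) t, rfl, ?_⟩
      rw [show (if (if h : (elimS K T (extendRewards T ω) t).Nonempty then
          (elimS K T (extendRewards T ω) t).min' h else 0) = a then (Set.univ : Set (Fin T → Fin K → ℝ)) else ∅)
        = if elimI K T (extendRewards T ω) t = a then Set.univ else ∅ from rfl, hω]
      simp
    · rintro ⟨B, hB, hmem⟩
      by_cases hc : (if h : B.Nonempty then B.min' h else 0) = a
      · rw [← hc]
        rw [show elimI K T (extendRewards T ω) t
          = (if h : (elimS K T (extendRewards T ω) t).Nonempty then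
            (elimS K T (extendRewards T ω) t).min' h else 0) from rfl]
        subst hB; rfl
      · rw [if_neg hc] at hmem
        exact absurd hmem (Set.notMem_empty ω)
  rw [this]
  refine MeasurableSet.iUnion fun B => (elim_elimS_measurable t B).inter ?_
  by_cases hc : (if h : B.Nonempty then B.min' h else 0) = a
  · rw [if_pos hc]; exact MeasurableSet.univ
  · rw [if_neg hc]; exact MeasurableSet.empty

end Meas

lemma elim_S0 {K T : ℕ} (X : ℕ → Fin K → ℝ) : elimS K T X 0 = Finset.univ := rfl

lemma elim_S_succ {K T : ℕ} (X : ℕ → Fin K → ℝ) (t : ℕ) :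
    elimS K T X (t+1) = (elimS K T X t).filter fun i =>
        ∀ j ∈ elimS K T X t,
          ((empMean X t j - empMean X t i : ℝ) : EReal) ≤ 2 * elimRho K T (t + 1) := rfl

lemma elim_S1 {K T : ℕ} (X : ℕ → Fin K → ℝ) : elimS K T X 1 = Finset.univ := by
  rw [elim_S_succ, elim_S0]
  rw [Finset.filter_true_of_mem]
  intro i _ j _
  have h1 : elimRho K T 1 = ⊤ := by simp [elimRho]
  rw [h1]
  have h2 : (2 : EReal) * ⊤ = ⊤ := by
    rw [EReal.mul_top_of_pos]
    norm_num
  rw [h2]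
  exact le_top

lemma elim_rho_coe {K T t : ℕ} (ht : 2 ≤ t) :
    (2 : EReal) * elimRho K T t
      = ((2 * Real.sqrt (Real.log ((K : ℝ) * (T : ℝ) ^ 2) / (2 * ((t : ℝ) - 1))) : ℝ) : EReal) := by
  rw [elimRho, if_neg (by omega)]
  rw [EReal.coe_mul]
  norm_cast

lemma elim_good_S {K T : ℕ} (μ : Fin K → ℝ) (iStar : Fin K)
    (hmax : ∀ i, μ i ≤ μ iStar) (X : ℕ → Fin K → ℝ) (L : ℝ)
    (hL : L = Real.log ((K : ℝ) * (T : ℝ) ^ 2))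
    (G : ∀ s, 1 ≤ s → s ≤ T → ∀ i, |empMean X s i - μ i| ≤ Real.sqrt (L / (2 * s))) :
    ∀ t, 1 ≤ t → t ≤ T → iStar ∈ elimS K T X t ∧
      (2 ≤ t → ∀ i ∈ elimS K T X t, μ iStar - μ i ≤ 4 * Real.sqrt (L / (2 * ((t:ℝ) - 1)))) := by
  intro t
  induction t with
  | zero => omega
  | succ t ih =>
    intro h1 hT
    rcases Nat.eq_or_lt_of_le h1 with h1' | h1'
    · -- t + 1 = 1
      have ht0 : t = 0 := by omega
      subst ht0
      rw [elim_S1]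
      exact ⟨Finset.mem_univ _, by omega⟩
    · -- t ≥ 1
      have ht1 : 1 ≤ t := by omega
      have htT : t ≤ T := by omega
      obtain ⟨hstar_mem, -⟩ := ih ht1 htT
      set r := Real.sqrt (L / (2 * (t:ℕ))) with hr
      have hGt := G t ht1 htT
      have hcast : ((t + 1 : ℕ) : ℝ) - 1 = (t : ℕ) := by push_cast; ring
      have hρ : (2 : EReal) * elimRho K T (t + 1) = ((2 * r : ℝ) : EReal) := by
        rw [elim_rho_coe (by omega)]
        congr 2
        rw [hcast, hr, hL]
      have hcond : ∀ i j : Fin K,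
          (((empMean X t j - empMean X t i : ℝ) : EReal) ≤ 2 * elimRho K T (t + 1))
            ↔ empMean X t j - empMean X t i ≤ 2 * r := by
        intro i j
        rw [hρ, EReal.coe_le_coe_iff]
      constructor
      · rw [elim_S_succ, Finset.mem_filter]
        refine ⟨hstar_mem, fun j hj => ?_⟩
        rw [hcond]
        have h2 := abs_le.mp (hGt j)
        have h3 := abs_le.mp (hGt iStar)
        have h4 := hmax j
        simp only [hr] at *
        linarith [h2.1, h2.2, h3.1, h3.2]
      · intro _ i hi
        rw [elim_S_succ, Finset.mem_filter] at hi
        have h5 := hi.2 iStar hstar_mem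
        rw [hcond] at h5
        have h2 := abs_le.mp (hGt i)
        have h3 := abs_le.mp (hGt iStar)
        rw [hcast]
        simp only [hr] at *
        linarith [h2.1, h2.2, h3.1, h3.2]

lemma elim_telescope (f : ℕ → ℝ) (a b : ℕ) (hab : a ≤ b + 1) :
    ∑ i ∈ Finset.Icc a b, (f i - f (i+1)) = f a - f (b+1) := by
  induction b with
  | zero =>
    rcases Nat.eq_or_lt_of_le hab with h | h
    · have : a = 1 := by omega
      subst this; simp
    · have : a = 0 := by omega
      subst this; simp
  | succ b ihb =>
    rcases Nat.eq_or_lt_of_le hab with h | h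
    · have : Finset.Icc a (b+1) = ∅ := by
        rw [Finset.Icc_eq_empty_iff]; omega
      rw [this]
      simp only [Finset.sum_empty]
      rw [show a = b + 2 by omega]
      ring
    · rw [Finset.sum_Icc_succ_top (by omega : a ≤ b + 1), ihb (by omega)]
      ring

lemma elim_abel (f g : ℕ → ℝ) (m : ℕ) :
    ∑ i ∈ Finset.Icc 1 m, (f i - f (i+1)) * g i
      = (∑ i ∈ Finset.Icc 1 m, f i * (g i - g (i-1))) - f (m+1) * g m + f 1 * g 0 := by
  induction m with
  | zero => simp
  | succ m ih =>
    rw [Finset.sum_Icc_succ_top (by omega : 1 ≤ m + 1),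
      Finset.sum_Icc_succ_top (by omega : 1 ≤ m + 1), ih]
    simp only [Nat.add_sub_cancel]
    ring

open scoped Classical in
lemma elim_count (N : ℕ) (b : ℝ) (hb : 0 ≤ b) (p : ℕ → Prop)
    (hp : ∀ s, 1 ≤ s → p s → (s : ℝ) ≤ b) :
    ((((Finset.Icc 1 N).filter p).card : ℕ) : ℝ) ≤ b := by
  have hsub : (Finset.Icc 1 N).filter p ⊆ Finset.Icc 1 (Nat.floor b) := by
    intro s hs
    rw [Finset.mem_filter, Finset.mem_Icc] at hs
    rw [Finset.mem_Icc]
    exact ⟨hs.1.1, Nat.le_floor (hp s hs.1.1 hs.2)⟩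
  calc ((((Finset.Icc 1 N).filter p).card : ℕ) : ℝ)
      ≤ ((Finset.Icc 1 (Nat.floor b)).card : ℝ) := by
        exact_mod_cast Finset.card_le_card hsub
  _ = (Nat.floor b : ℝ) := by rw [Nat.card_Icc]; simp
  _ ≤ b := Nat.floor_le hb

open scoped Classical in
lemma elim_round_bound (D : ℕ → ℝ) (n : ℕ) (hn2 : 2 ≤ n)
    (hanti : ∀ i j, 1 ≤ i → i ≤ j → j ≤ n → D j ≤ D i) (hlast : D n = 0)
    (C : ℝ) (hC0 : 0 ≤ C) (s : ℕ) (hs1 : 1 ≤ s)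
    (j : ℕ) (hj : j ∈ Finset.Icc 1 n) (hDj : D j ≤ Real.sqrt (C / s)) :
    D j ≤ ∑ i ∈ (Finset.Icc 1 (n-1)).filter (fun i => (s:ℝ) * D i ^ 2 ≤ C),
      (D i - D (i+1)) := by
  rw [Finset.mem_Icc] at hj
  have hD0 : ∀ i, 1 ≤ i → i ≤ n → 0 ≤ D i := by
    intro i h1 h2
    have := hanti i n h1 h2 le_rfl
    rw [hlast] at this; linarith
  have hterm0 : ∀ i ∈ Finset.Icc 1 (n-1), 0 ≤ D i - D (i+1) := by
    intro i hi
    rw [Finset.mem_Icc] at hi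
    have := hanti i (i+1) hi.1 (by omega) (by omega)
    linarith
  have hs0 : (0:ℝ) < (s:ℝ) := by exact_mod_cast hs1
  have hDj2 : (s:ℝ) * D j ^ 2 ≤ C := by
    have h1 : D j ^ 2 ≤ C / s := by
      have h2 := pow_le_pow_left₀ (hD0 j hj.1 hj.2) hDj 2
      rwa [Real.sq_sqrt (div_nonneg hC0 hs0.le)] at h2
    rw [mul_comm, ← le_div_iff₀ hs0]
    exact h1
  rcases Nat.eq_or_lt_of_le hj.2 with hjn | hjn
  · rw [hjn, hlast]
    exact Finset.sum_nonneg fun i hi => hterm0 i (Finset.mem_filter.mp hi).1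
  · -- j ≤ n - 1
    have hjm : j ≤ n - 1 := by omega
    have hsubset : Finset.Icc j (n-1)
        ⊆ (Finset.Icc 1 (n-1)).filter (fun i => (s:ℝ) * D i ^ 2 ≤ C) := by
      intro i hi
      rw [Finset.mem_Icc] at hi
      rw [Finset.mem_filter, Finset.mem_Icc]
      refine ⟨⟨by omega, hi.2⟩, ?_⟩
      have hDij : D i ≤ D j := hanti j i hj.1 hi.1 (by omega)
      have hDi0 : 0 ≤ D i := hD0 i (by omega) (by omega)
      have : D i ^ 2 ≤ D j ^ 2 := pow_le_pow_left₀ hDi0 hDij 2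
      nlinarith
    have htel : ∑ i ∈ Finset.Icc j (n-1), (D i - D (i+1)) = D j := by
      rw [elim_telescope D j (n-1) (by omega), show n - 1 + 1 = n by omega, hlast, sub_zero]
    rw [← htel]
    exact Finset.sum_le_sum_of_subset_of_nonneg hsubset
      (fun i hi hni => hterm0 i (Finset.mem_filter.mp hi).1)

open scoped Classical in
lemma elim_sum_bound (D : ℕ → ℝ) (n : ℕ) (hn2 : 2 ≤ n)
    (hanti : ∀ i j, 1 ≤ i → i ≤ j → j ≤ n → D j ≤ D i) (hlast : D n = 0)
    (hDpos : ∀ j, 1 ≤ j → j ≤ n - 1 → 0 < D j)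
    (C : ℝ) (hC0 : 0 ≤ C) (N : ℕ) :
    ∑ s ∈ Finset.Icc 1 N, (∑ i ∈ (Finset.Icc 1 (n-1)).filter (fun i => (s:ℝ) * D i ^ 2 ≤ C),
        (D i - D (i+1)))
      ≤ C / D 1 + C * ∑ i ∈ Finset.Icc 2 (n-1), (1 / D i ^ 2 - 1 / D (i-1) ^ 2) * D i := by
  set b : ℕ → ℝ := fun i => if i = 0 then 0 else C / D i ^ 2 with hb
  have hterm0 : ∀ i, 1 ≤ i → i ≤ n-1 → 0 ≤ D i - D (i+1) := by
    intro i h1 h2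
    have := hanti i (i+1) h1 (by omega) (by omega)
    linarith
  have hswap : ∑ s ∈ Finset.Icc 1 N, (∑ i ∈ (Finset.Icc 1 (n-1)).filter
        (fun i => (s:ℝ) * D i ^ 2 ≤ C), (D i - D (i+1)))
      = ∑ i ∈ Finset.Icc 1 (n-1), (D i - D (i+1)) *
          (((Finset.Icc 1 N).filter (fun s : ℕ => (s:ℝ) * D i ^ 2 ≤ C)).card : ℝ) := by
    calc ∑ s ∈ Finset.Icc 1 N, (∑ i ∈ (Finset.Icc 1 (n-1)).filter
          (fun i => (s:ℝ) * D i ^ 2 ≤ C), (D i - D (i+1)))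
        = ∑ s ∈ Finset.Icc 1 N, ∑ i ∈ Finset.Icc 1 (n-1),
            (if (s:ℝ) * D i ^ 2 ≤ C then D i - D (i+1) else 0) :=
          Finset.sum_congr rfl fun s _ => Finset.sum_filter _ _
    _ = ∑ i ∈ Finset.Icc 1 (n-1), ∑ s ∈ Finset.Icc 1 N,
            (if (s:ℝ) * D i ^ 2 ≤ C then D i - D (i+1) else 0) := Finset.sum_comm
    _ = ∑ i ∈ Finset.Icc 1 (n-1), (D i - D (i+1)) *
          (((Finset.Icc 1 N).filter (fun s : ℕ => (s:ℝ) * D i ^ 2 ≤ C)).card : ℝ) := by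
          refine Finset.sum_congr rfl fun i _ => ?_
          rw [← Finset.sum_filter, Finset.sum_const, nsmul_eq_mul, mul_comm]
  rw [hswap]
  have hcount : ∀ i, 1 ≤ i → i ≤ n - 1 →
      (((Finset.Icc 1 N).filter (fun s : ℕ => (s:ℝ) * D i ^ 2 ≤ C)).card : ℝ) ≤ b i := by
    intro i h1 h2
    have hDi := hDpos i h1 h2
    have hi0 : i ≠ 0 := by omega
    have hbi : b i = C / D i ^ 2 := by simp [hb, hi0]
    rw [hbi]
    refine elim_count N _ (by positivity) _ ?_
    intro s hs1 hps
    rw [le_div_iff₀ (by positivity)]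
    linarith
  have hstep1 : ∑ i ∈ Finset.Icc 1 (n-1), (D i - D (i+1)) *
        (((Finset.Icc 1 N).filter (fun s : ℕ => (s:ℝ) * D i ^ 2 ≤ C)).card : ℝ)
      ≤ ∑ i ∈ Finset.Icc 1 (n-1), (D i - D (i+1)) * b i := by
    refine Finset.sum_le_sum fun i hi => ?_
    rw [Finset.mem_Icc] at hi
    exact mul_le_mul_of_nonneg_left (hcount i hi.1 hi.2) (hterm0 i hi.1 hi.2)
  refine hstep1.trans ?_
  rw [elim_abel D b (n-1)]
  rw [show n - 1 + 1 = n by omega, hlast, zero_mul, sub_zero, show b 0 = 0 by simp [hb],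
    mul_zero, add_zero]
  have hsplit : Finset.Icc 1 (n-1) = insert 1 (Finset.Icc 2 (n-1)) := by
    ext i; simp only [Finset.mem_insert, Finset.mem_Icc]; omega
  rw [hsplit, Finset.sum_insert (by simp)]
  have hD1 : 0 < D 1 := hDpos 1 le_rfl (by omega)
  have hfirst : D 1 * (b 1 - b 0) = C / D 1 := by
    rw [show b 0 = 0 by simp [hb], show b 1 = C / D 1 ^ 2 by simp [hb], sub_zero,
      pow_two, ← div_div]
    rw [mul_comm, div_mul_cancel₀ _ hD1.ne']
  rw [hfirst]
  refine add_le_add_right (le_of_eq ?_) _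
  rw [Finset.mul_sum]
  refine Finset.sum_congr rfl fun i hi => ?_
  rw [Finset.mem_Icc] at hi
  have hi0 : i ≠ 0 := by omega
  have hi10 : i - 1 ≠ 0 := by omega
  rw [show b i = C / D i ^ 2 by simp [hb, hi0],
    show b (i-1) = C / D (i-1) ^ 2 by simp [hb, hi10]]
  ring

end ElimAux

/-- **Distribution dependent regret bound.** Suppose the best arm `iStar` is unique and
has (1-indexed) position at least `2`.  Let `D 1 ≥ D 2 ≥ … ≥ D n = 0` (with
`n = iStar.val + 1` the 1-indexed position of the best arm) be the decreasing
rearrangement, via the permutation `σ`, of the gaps `Δ_i = μ_{i*} - μ_i` of the arms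
`i ≤ iStar`, and let `C = 8 ln(K T²)`.  Then the pseudo-regret of ELIM with horizon `T`
is at most `D 1 + C / D 1 + C ∑_{i=2}^{n-1} (1/(D i)² - 1/(D (i-1))²) D i + 2`. -/
theorem elim_distribution_dependent_regret
    (K T : ℕ) [NeZero K] (hT : 1 ≤ T)
    (ν : Measure (Fin K → ℝ)) [IsProbabilityMeasure ν]
    (hsupp : ∀ᵐ x ∂ν, ∀ i, x i ∈ Set.Icc (0 : ℝ) 1)
    (μ : Fin K → ℝ) (hμ : ∀ i, μ i = ∫ x, x i ∂ν)
    (iStar : Fin K) (hstar : ∀ i, i ≠ iStar → μ i < μ iStar)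
    (hpos : 1 ≤ iStar.val)
    (n : ℕ) (hn : n = iStar.val + 1)
    (σ : Equiv.Perm ℕ) (hσ : ∀ i ∈ Finset.Icc 1 n, σ i ∈ Finset.Icc 1 n)
    (D : ℕ → ℝ)
    (hD : ∀ i, ∀ hi : i ∈ Finset.Icc 1 n,
      D i = μ iStar - μ ⟨σ i - 1, by
        have h1 := hσ i hi
        rw [Finset.mem_Icc] at h1
        have h2 := iStar.isLt
        omega⟩)
    (hanti : ∀ i j, 1 ≤ i → i ≤ j → j ≤ n → D j ≤ D i)
    (hlast : D n = 0)
    (C : ℝ) (hC : C = 8 * Real.log ((K : ℝ) * (T : ℝ) ^ 2)) :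
    (∫ ω, (∑ t ∈ Finset.Icc 1 T, (μ iStar - μ (elimI K T (extendRewards T ω) t)))
        ∂(Measure.pi fun _ : Fin T => ν))
      ≤ D 1 + C / D 1
          + C * ∑ i ∈ Finset.Icc 2 (n - 1),
              (1 / (D i) ^ 2 - 1 / (D (i - 1)) ^ 2) * D i
          + 2 := by
  classical
  set P := Measure.pi fun _ : Fin T => ν with hP
  haveI hPprob : IsProbabilityMeasure P := by rw [hP]; infer_instance
  set L := Real.log ((K : ℝ) * (T : ℝ) ^ 2) with hLdef
  have hK2 : 2 ≤ K := by have := iStar.isLt; omega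
  have hT0 : (0:ℝ) < (T:ℝ) := by exact_mod_cast hT
  have hK0 : (0:ℝ) < (K:ℝ) := by exact_mod_cast (by omega : 0 < K)
  have hKT1 : (1:ℝ) ≤ (K:ℝ) * (T:ℝ) ^ 2 := by
    have h1 : (1:ℝ) ≤ (K:ℝ) := by exact_mod_cast (by omega : 1 ≤ K)
    have hT1 : (1:ℝ) ≤ (T:ℝ) := by exact_mod_cast hT
    nlinarith
  have hL0 : 0 ≤ L := Real.log_nonneg hKT1
  have hC0 : 0 ≤ C := by rw [hC]; linarith
  have hn2 : 2 ≤ n := by omega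
  have hmax : ∀ i, μ i ≤ μ iStar := by
    intro i
    by_cases h : i = iStar
    · rw [h]
    · exact (hstar i h).le
  have hXi_meas : ∀ i : Fin K, Measurable (fun x : Fin K → ℝ => x i) :=
    fun i => measurable_pi_apply i
  have hXi_bd : ∀ i : Fin K, ∀ᵐ x ∂ν, x i ∈ Set.Icc (0:ℝ) 1 :=
    fun i => hsupp.mono fun x hx => hx i
  have hμmem : ∀ i, μ i ∈ Set.Icc (0:ℝ) 1 := by
    intro i
    rw [hμ i]
    exact (elim_mean_mem (hXi_meas i) (hXi_bd i)).2
  -- facts about D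
  have hD0 : ∀ j, 1 ≤ j → j ≤ n → 0 ≤ D j := by
    intro j h1 h2
    have := hanti j n h1 h2 le_rfl
    rw [hlast] at this; linarith
  have hσn : σ n = n := by
    have hnmem : n ∈ Finset.Icc 1 n := by rw [Finset.mem_Icc]; omega
    have harm := hD n hnmem
    rw [hlast] at harm
    have hσn1 : 1 ≤ σ n ∧ σ n ≤ n := by
      have := hσ n hnmem; rwa [Finset.mem_Icc] at this
    have harm2 : (⟨σ n - 1, by have := iStar.isLt; omega⟩ : Fin K) = iStar := by
      by_contra hne
      have := hstar _ hne
      linarith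
    have hval : σ n - 1 = iStar.val := congrArg Fin.val harm2
    omega
  have hDpos : ∀ j, 1 ≤ j → j ≤ n - 1 → 0 < D j := by
    intro j h1 h2
    have hjmem : j ∈ Finset.Icc 1 n := by rw [Finset.mem_Icc]; omega
    have hσj : 1 ≤ σ j ∧ σ j ≤ n := by
      have := hσ j hjmem; rwa [Finset.mem_Icc] at this
    have hσjn : σ j ≠ n := by
      intro hcon
      have : j = n := σ.injective (by rw [hcon, hσn])
      omega
    rw [hD j hjmem]
    have hne : (⟨σ j - 1, by have := iStar.isLt; omega⟩ : Fin K) ≠ iStar := by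
      intro hcon
      have := congrArg Fin.val hcon
      simp only at this
      omega
    have := hstar _ hne
    linarith
  have hgapD : ∀ a : Fin K, (a : ℕ) ≤ (iStar : ℕ) →
      ∃ j ∈ Finset.Icc 1 n, D j = μ iStar - μ a := by
    intro a ha
    have hσim : (Finset.Icc 1 n).image σ = Finset.Icc 1 n := by
      refine Finset.eq_of_subset_of_card_le ?_ ?_
      · intro y hy
        obtain ⟨j, hj, rfl⟩ := Finset.mem_image.mp hy
        exact hσ j hj
      · rw [Finset.card_image_of_injective _ σ.injective]
    have hy : (a : ℕ) + 1 ∈ Finset.Icc 1 n := by rw [Finset.mem_Icc]; omega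
    rw [← hσim] at hy
    obtain ⟨j, hj, hσj⟩ := Finset.mem_image.mp hy
    refine ⟨j, hj, ?_⟩
    rw [hD j hj]
    exact congrArg (fun z => μ iStar - μ z) (Fin.ext (show σ j - 1 = (a : ℕ) by omega))
  -- play facts
  have hplay : ∀ (X : ℕ → Fin K → ℝ) (t : ℕ), iStar ∈ elimS K T X t →
      elimI K T X t ∈ elimS K T X t ∧ (elimI K T X t : ℕ) ≤ (iStar : ℕ) := by
    intro X t hmem
    have hne : (elimS K T X t).Nonempty := ⟨iStar, hmem⟩
    rw [elimI, dif_pos hne]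
    exact ⟨Finset.min'_mem _ _, Finset.min'_le _ _ hmem⟩
  set r : ℕ → ℝ := fun s => Real.sqrt (L / (2 * s)) with hrdef
  set G : Set (Fin T → Fin K → ℝ) :=
    {ω | ∀ s, 1 ≤ s → s ≤ T → ∀ i, |empMean (extendRewards T ω) s i - μ i| ≤ r s} with hGdef
  set inr : ℕ → ℝ := fun s => ∑ i ∈ (Finset.Icc 1 (n-1)).filter
    (fun i => (s:ℝ) * D i ^ 2 ≤ C), (D i - D (i+1)) with hinr
  set c0 : ℝ := D 1 + ∑ s ∈ Finset.Icc 1 (T-1), inr s with hc0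
  have h4r : ∀ s : ℕ, 1 ≤ s → 4 * Real.sqrt (L / (2 * s)) = Real.sqrt (C / s) := by
    intro s hs
    have hs0 : (0:ℝ) < (s:ℝ) := by exact_mod_cast hs
    rw [show C / (s:ℝ) = 4 ^ 2 * (L / (2 * s)) by rw [hC]; field_simp; ring]
    rw [Real.sqrt_mul (by positivity) _, Real.sqrt_sq (by norm_num)]
  -- good event regret
  have hgoodreg : ∀ ω ∈ G,
      (∑ t ∈ Finset.Icc 1 T, (μ iStar - μ (elimI K T (extendRewards T ω) t))) ≤ c0 := by
    intro ω hω
    set X := extendRewards T ω with hX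
    have hGS := elim_good_S μ iStar hmax X L hLdef (fun s h1 h2 i => hω s h1 h2 i)
    rw [show Finset.Icc 1 T = insert 1 (Finset.Icc 2 T) by
      ext x; simp only [Finset.mem_insert, Finset.mem_Icc]; omega,
      Finset.sum_insert (by simp)]
    rw [hc0]
    apply add_le_add
    · -- round 1
      have h1mem : iStar ∈ elimS K T X 1 := by rw [elim_S1]; exact Finset.mem_univ _
      obtain ⟨hIin, hIle⟩ := hplay X 1 h1mem
      obtain ⟨j, hj, hDj⟩ := hgapD (elimI K T X 1) hIle
      rw [Finset.mem_Icc] at hj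
      rw [← hDj]
      exact hanti 1 j le_rfl hj.1 hj.2
    · -- rounds 2..T
      have hper : ∀ t ∈ Finset.Icc 2 T,
          μ iStar - μ (elimI K T X t) ≤ inr (t - 1) := by
        intro t ht
        rw [Finset.mem_Icc] at ht
        obtain ⟨hmem, hbd⟩ := hGS t (by omega) ht.2
        obtain ⟨hIin, hIle⟩ := hplay X t hmem
        obtain ⟨j, hj, hDj⟩ := hgapD _ hIle
        have hgapbd := hbd ht.1 _ hIin
        have hcast : ((t:ℕ):ℝ) - 1 = ((t - 1 : ℕ):ℝ) := by
          rw [Nat.cast_sub (by omega)]; norm_num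
        rw [hcast] at hgapbd
        rw [h4r (t-1) (by omega)] at hgapbd
        rw [← hDj] at hgapbd ⊢
        exact elim_round_bound D n hn2 hanti hlast C hC0 (t-1) (by omega) j hj hgapbd
      calc ∑ t ∈ Finset.Icc 2 T, (μ iStar - μ (elimI K T X t))
          ≤ ∑ t ∈ Finset.Icc 2 T, inr (t - 1) := Finset.sum_le_sum hper
      _ = ∑ s ∈ Finset.Icc 1 (T-1), inr s := by
          rw [show Finset.Icc 2 T = (Finset.Icc 1 (T-1)).map
            ⟨fun s => s + 1, fun a b h => by simpa using h⟩ by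
              ext x
              simp only [Finset.mem_map, Finset.mem_Icc, Function.Embedding.coeFn_mk]
              constructor
              · intro hx
                exact ⟨x - 1, by omega, by show x - 1 + 1 = x; omega⟩
              · rintro ⟨a, ha, rfl⟩
                show 2 ≤ a + 1 ∧ a + 1 ≤ T
                omega]
          rw [Finset.sum_map]
          refine Finset.sum_congr rfl fun s _ => ?_
          show inr (s + 1 - 1) = inr s
          rw [Nat.add_sub_cancel]
  -- measurability of G
  have hGmeas : MeasurableSet G := by
    have hGeq : G = ⋂ (s : ℕ), ⋂ (_ : 1 ≤ s ∧ s ≤ T), ⋂ (i : Fin K),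
        {ω : Fin T → Fin K → ℝ | |empMean (extendRewards T ω) s i - μ i| ≤ r s} := by
      ext ω
      simp only [hGdef, Set.mem_setOf_eq, Set.mem_iInter]
      exact ⟨fun h s hs i => h s hs.1 hs.2 i, fun h s h1 h2 i => h s ⟨h1, h2⟩ i⟩
    rw [hGeq]
    refine MeasurableSet.iInter fun s => MeasurableSet.iInter fun _ =>
      MeasurableSet.iInter fun i => ?_
    exact measurableSet_le (((elim_empMean_measurable s i).sub measurable_const).abs)
      measurable_const
  -- bad probability
  have hint_i : ∀ i : Fin K, Integrable (fun y : Fin K → ℝ => y i) ν :=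
    fun i => (elim_mean_mem (hXi_meas i) (hXi_bd i)).1
  have hμint : ∀ i : Fin K, (∫ y : Fin K → ℝ, y i ∂ν) = μ i := fun i => (hμ i).symm
  set E := ENNReal.ofReal (Real.exp (-L)) with hE
  set Ap : ℕ → Fin K → Set (Fin T → Fin K → ℝ) := fun s i =>
    {ω | (s:ℝ) * r s ≤ ∑ k ∈ Finset.range s,
      (extendRewards T ω k i - ∫ y : Fin K → ℝ, y i ∂ν)} with hApdef
  set Am : ℕ → Fin K → Set (Fin T → Fin K → ℝ) := fun s i =>
    {ω | (s:ℝ) * r s ≤ ∑ k ∈ Finset.range s,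
      ((1 - extendRewards T ω k i) - ∫ y : Fin K → ℝ, (1 - y i) ∂ν)} with hAmdef
  have hexp : ∀ s : ℕ, 1 ≤ s →
      ENNReal.ofReal (Real.exp (-(2 * s * (r s) ^ 2))) = E := by
    intro s hs
    have hs0 : (0:ℝ) < (s:ℝ) := by exact_mod_cast hs
    have hr2 : (r s) ^ 2 = L / (2 * s) := Real.sq_sqrt (by positivity)
    rw [hE]
    congr 1
    rw [hr2]
    congr 1
    field_simp
  have hAp_le : ∀ s, 1 ≤ s → s ≤ T → ∀ i : Fin K, P (Ap s i) ≤ E := by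
    intro s hs1 hsT i
    have := elim_chernoff (T := T) ν (fun x => x i) (hXi_meas i) (hXi_bd i) s hs1 hsT
      (r s) (Real.sqrt_nonneg _)
    rw [hexp s hs1] at this
    exact this
  have hAm_le : ∀ s, 1 ≤ s → s ≤ T → ∀ i : Fin K, P (Am s i) ≤ E := by
    intro s hs1 hsT i
    have := elim_chernoff (T := T) ν (fun x => 1 - x i)
      (measurable_const.sub (hXi_meas i))
      (hsupp.mono fun x hx => by
        have := hx i
        simp only [Set.mem_Icc] at this ⊢
        constructor <;> linarith [this.1, this.2])
      s hs1 hsT (r s) (Real.sqrt_nonneg _)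
    rw [hexp s hs1] at this
    exact this
  have hint2 : ∀ i : Fin K, (∫ y : Fin K → ℝ, (1 - y i) ∂ν) = 1 - μ i := by
    intro i
    rw [integral_sub (integrable_const 1) (hint_i i), integral_const, hμint i]
    simp
  have hsub : Gᶜ ⊆ ⋃ s ∈ Finset.Icc 1 T, ⋃ i ∈ (Finset.univ : Finset (Fin K)),
      (Ap s i ∪ Am s i) := by
    intro ω hω
    simp only [Set.mem_compl_iff, hGdef, Set.mem_setOf_eq] at hω
    push_neg at hω
    obtain ⟨s, hs1, hsT, i, hlt⟩ := hω
    have hs0 : (0:ℝ) < (s:ℝ) := by exact_mod_cast hs1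
    simp only [Set.mem_iUnion, Set.mem_union, Finset.mem_Icc, Finset.mem_univ,
      exists_prop, true_and]
    refine ⟨s, ⟨hs1, hsT⟩, i, ?_⟩
    set Ssum := ∑ k ∈ Finset.range s, extendRewards T ω k i with hSsum
    have hemp : empMean (extendRewards T ω) s i = Ssum / s := rfl
    rcases lt_abs.mp hlt with hcase | hcase
    · left
      show (s:ℝ) * r s ≤ ∑ k ∈ Finset.range s,
        (extendRewards T ω k i - ∫ y : Fin K → ℝ, y i ∂ν)
      rw [hμint i]
      have hsum : ∑ k ∈ Finset.range s, (extendRewards T ω k i - μ i)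
          = Ssum - s * μ i := by
        rw [Finset.sum_sub_distrib, Finset.sum_const, Finset.card_range, nsmul_eq_mul, hSsum]
      rw [hsum]
      rw [hemp] at hcase
      have := mul_lt_mul_of_pos_left hcase hs0
      rw [mul_sub, mul_div_cancel₀ _ hs0.ne'] at this
      linarith
    · right
      show (s:ℝ) * r s ≤ ∑ k ∈ Finset.range s,
        ((1 - extendRewards T ω k i) - ∫ y : Fin K → ℝ, (1 - y i) ∂ν)
      rw [hint2 i]
      have hsum : ∑ k ∈ Finset.range s, ((1 - extendRewards T ω k i) - (1 - μ i))
          = s * μ i - Ssum := by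
        have : ∀ k, (1 - extendRewards T ω k i) - (1 - μ i)
            = μ i - extendRewards T ω k i := fun k => by ring
        simp_rw [this]
        rw [Finset.sum_sub_distrib, Finset.sum_const, Finset.card_range, nsmul_eq_mul, hSsum]
      rw [hsum]
      rw [hemp] at hcase
      have := mul_lt_mul_of_pos_left hcase hs0
      rw [mul_neg, mul_sub, mul_div_cancel₀ _ hs0.ne'] at this
      linarith
  have hbadP : P Gᶜ ≤ ENNReal.ofReal (2 / T) := by
    have hstep : P Gᶜ ≤ ∑ s ∈ Finset.Icc 1 T, ∑ i ∈ (Finset.univ : Finset (Fin K)),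
        (E + E) := by
      calc P Gᶜ ≤ P (⋃ s ∈ Finset.Icc 1 T, ⋃ i ∈ (Finset.univ : Finset (Fin K)),
            (Ap s i ∪ Am s i)) := measure_mono hsub
      _ ≤ ∑ s ∈ Finset.Icc 1 T, P (⋃ i ∈ (Finset.univ : Finset (Fin K)),
            (Ap s i ∪ Am s i)) := measure_biUnion_finset_le _ _
      _ ≤ ∑ s ∈ Finset.Icc 1 T, ∑ i ∈ (Finset.univ : Finset (Fin K)),
            P (Ap s i ∪ Am s i) :=
          Finset.sum_le_sum fun s _ => measure_biUnion_finset_le _ _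
      _ ≤ ∑ s ∈ Finset.Icc 1 T, ∑ i ∈ (Finset.univ : Finset (Fin K)), (E + E) := by
          refine Finset.sum_le_sum fun s hs => Finset.sum_le_sum fun i _ => ?_
          rw [Finset.mem_Icc] at hs
          exact le_trans (measure_union_le _ _)
            (add_le_add (hAp_le s hs.1 hs.2 i) (hAm_le s hs.1 hs.2 i))
    refine hstep.trans ?_
    rw [Finset.sum_const, Finset.sum_const, Finset.card_univ, Fintype.card_fin, Nat.card_Icc]
    simp only [Nat.add_sub_cancel, smul_smul]
    rw [nsmul_eq_mul]
    have hKTpos : (0:ℝ) < (K:ℝ) * (T:ℝ) ^ 2 := by positivity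
    have hEe : E + E = ENNReal.ofReal (2 * Real.exp (-L)) := by
      rw [hE, ← ENNReal.ofReal_add (Real.exp_nonneg _) (Real.exp_nonneg _)]
      congr 1
      ring
    rw [hEe]
    have hcast : ((T * K : ℕ) : ENNReal) = ENNReal.ofReal ((T:ℝ) * (K:ℝ)) := by
      rw [← ENNReal.ofReal_natCast]
      congr 1
      push_cast
      ring
    rw [hcast, ← ENNReal.ofReal_mul (by positivity)]
    refine ENNReal.ofReal_le_ofReal (le_of_eq ?_)
    rw [hLdef, Real.exp_neg, Real.exp_log hKTpos]
    field_simp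
  have hbadR : (P Gᶜ).toReal ≤ 2 / T :=
    ENNReal.toReal_le_of_le_ofReal (by positivity) hbadP
  -- regret function bounds
  set reg : (Fin T → Fin K → ℝ) → ℝ :=
    fun ω => ∑ t ∈ Finset.Icc 1 T, (μ iStar - μ (elimI K T (extendRewards T ω) t)) with hreg
  have hgap01 : ∀ (ω : Fin T → Fin K → ℝ) (t : ℕ),
      0 ≤ μ iStar - μ (elimI K T (extendRewards T ω) t) ∧
      μ iStar - μ (elimI K T (extendRewards T ω) t) ≤ 1 := by
    intro ω t
    have h1 := hmax (elimI K T (extendRewards T ω) t)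
    have h2 := hμmem (elimI K T (extendRewards T ω) t)
    have h3 := hμmem iStar
    exact ⟨by linarith, by linarith [h2.1, h3.2]⟩
  have hregT : ∀ ω, reg ω ≤ (T:ℝ) := by
    intro ω
    calc reg ω ≤ ∑ t ∈ Finset.Icc 1 T, (1:ℝ) :=
        Finset.sum_le_sum fun t _ => (hgap01 ω t).2
    _ = (T:ℝ) := by
        rw [Finset.sum_const, Nat.card_Icc]
        simp
  have hreg0 : ∀ ω, 0 ≤ reg ω := fun ω =>
    Finset.sum_nonneg fun t _ => (hgap01 ω t).1
  have hregmeas : Measurable reg := by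
    refine Finset.measurable_sum _ fun t _ => ?_
    exact measurable_const.sub ((measurable_of_countable μ).comp (elim_elimI_measurable t))
  have hreg_int : Integrable reg P := by
    refine Integrable.mono' (integrable_const (T:ℝ)) hregmeas.aestronglyMeasurable ?_
    refine Filter.Eventually.of_forall fun ω => ?_
    rw [Real.norm_eq_abs, abs_of_nonneg (hreg0 ω)]
    exact hregT ω
  have hc00 : 0 ≤ c0 := by
    rw [hc0]
    have h1 : 0 ≤ D 1 := hD0 1 le_rfl (by omega)
    have h2 : 0 ≤ ∑ s ∈ Finset.Icc 1 (T-1), inr s := by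
      refine Finset.sum_nonneg fun s _ => Finset.sum_nonneg fun i hi => ?_
      have hi2 := (Finset.mem_filter.mp hi).1
      rw [Finset.mem_Icc] at hi2
      have := hanti i (i+1) hi2.1 (by omega) (by omega)
      linarith
    linarith
  set maj : (Fin T → Fin K → ℝ) → ℝ :=
    fun ω => c0 + Set.indicator Gᶜ (fun _ => (T:ℝ)) ω with hmaj
  have hmaj_int : Integrable maj P :=
    (integrable_const c0).add ((integrable_const (T:ℝ)).indicator hGmeas.compl)
  have hpt : reg ≤ maj := by
    intro ω
    by_cases hω : ω ∈ G
    · have hnot : ω ∉ Gᶜ := fun hc => hc hω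
      rw [hmaj]
      simp only
      rw [Set.indicator_of_notMem hnot, add_zero]
      exact hgoodreg ω hω
    · have hmem : ω ∈ Gᶜ := Set.mem_compl hω
      rw [hmaj]
      simp only
      rw [Set.indicator_of_mem hmem]
      linarith [hregT ω]
  calc ∫ ω, reg ω ∂P ≤ ∫ ω, maj ω ∂P := integral_mono hreg_int hmaj_int hpt
  _ = c0 + (P Gᶜ).toReal * (T:ℝ) := by
      rw [hmaj]
      rw [integral_add (integrable_const c0) ((integrable_const (T:ℝ)).indicator hGmeas.compl)]
      rw [integral_const, integral_indicator_const _ hGmeas.compl]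
      simp [smul_eq_mul, measureReal_def]
  _ ≤ c0 + 2 := by
      have h1 : (P Gᶜ).toReal * (T:ℝ) ≤ (2 / T) * (T:ℝ) :=
        mul_le_mul_of_nonneg_right hbadR hT0.le
      rw [div_mul_cancel₀ _ hT0.ne'] at h1
      linarith
  _ ≤ D 1 + C / D 1
          + C * ∑ i ∈ Finset.Icc 2 (n - 1), (1 / (D i) ^ 2 - 1 / (D (i - 1)) ^ 2) * D i
          + 2 := by
      have hsum := elim_sum_bound D n hn2 hanti hlast hDpos C hC0 (T-1)
      rw [hc0]
      have : ∑ s ∈ Finset.Icc 1 (T-1), inr s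
          ≤ C / D 1 + C * ∑ i ∈ Finset.Icc 2 (n - 1),
            (1 / (D i) ^ 2 - 1 / (D (i - 1)) ^ 2) * D i := hsum
      linarith
end

section
/- Bound on the integer program: let n ≥ 2 be an integer, let Δ_1, …, Δ_n be reals with Δ_n = 0 and Δ_j > 0 for all j < n, let Δ_{(1)} ≥ Δ_{(2)} ≥ … ≥ Δ_{(n)} = 0 be the decreasing rearrangement of (Δ_1, …, Δ_n), and let C > 0. Then for every tuple (a_1, …, a_n) of natural numbers satisfying ∑_{i=1}^j a_i ≤ C/Δ_j² + 1 for every index j < n with a_j > 0, we have ∑_{j=1}^n a_j·Δ_j ≤ Δ_{(1)} + C/Δ_{(1)} + C·∑_{i=2}^{n−1} (1/Δ_{(i)}² − 1/Δ_{(i−1)}²)·Δ_{(i)}. -/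
private lemma tele_aux (f : ℕ → ℝ) (m : ℕ) :
    ∀ k, m ≤ k → ∑ i ∈ Finset.Ico m k, (f i - f (i + 1)) = f m - f k := by
  intro k
  induction k with
  | zero => intro h; simp [Nat.le_zero.mp h]
  | succ k ih =>
    intro h
    rcases Nat.lt_or_ge m (k + 1) with h' | h'
    · have hmk : m ≤ k := by omega
      rw [Finset.sum_Ico_succ_top hmk, ih hmk]; ring
    · have hmk : m = k + 1 := by omega
      simp [hmk]

private lemma abel_aux (d : ℕ → ℝ) :
    ∀ N, 1 ≤ N → (∀ i, 1 ≤ i → i ≤ N → d i ≠ 0) →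
    ∑ i ∈ Finset.Icc 1 N, (d i - d (i + 1)) / (d i) ^ 2
      = 1 / d 1 - d (N + 1) / (d N) ^ 2
        + ∑ i ∈ Finset.Icc 2 N, (1 / (d i) ^ 2 - 1 / (d (i - 1)) ^ 2) * d i := by
  intro N
  induction N with
  | zero => omega
  | succ N ih =>
    intro _ hne
    rcases Nat.lt_or_ge N 1 with hN | hN
    · have hN0 : N = 0 := by omega
      subst hN0
      have h1 : d 1 ≠ 0 := hne 1 le_rfl le_rfl
      simp only [Finset.Icc_self, Finset.sum_singleton]
      rw [show Finset.Icc 2 1 = ∅ by rfl]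
      simp only [Finset.sum_empty, add_zero]
      field_simp
    · have hih := ih hN (fun i h1 h2 => hne i h1 (by omega))
      rw [Finset.sum_Icc_succ_top (by omega : 1 ≤ N + 1),
        Finset.sum_Icc_succ_top (by omega : 2 ≤ N + 1), hih]
      have hN1 : d (N + 1) ≠ 0 := hne (N + 1) (by omega) le_rfl
      have hN0 : d N ≠ 0 := hne N hN (by omega)
      simp only [Nat.add_sub_cancel]
      field_simp
      ring

/-- **Bound on the integer program.** Let `n ≥ 2`, let `Δ_1, …, Δ_n` be gaps with
`Δ_n = 0` and `Δ_j > 0` for `j < n`, let `Δ_{(1)} ≥ … ≥ Δ_{(n)} = 0` be their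
decreasing rearrangement (given as `Δ ∘ σ` for a permutation `σ` preserving
`{1, …, n}`), and let `C > 0`.  Every tuple of naturals `(a_1, …, a_n)` with
`∑_{i=1}^j a_i ≤ C / Δ_j² + 1` for each index `j < n` with `a_j > 0` satisfies
`∑_{j=1}^n a_j Δ_j ≤ Δ_{(1)} + C/Δ_{(1)} + C ∑_{i=2}^{n-1} (1/Δ_{(i)}² - 1/Δ_{(i-1)}²) Δ_{(i)}`. -/
theorem integer_program_bound
    (n : ℕ) (hn : 2 ≤ n) (C : ℝ) (hC : 0 < C)
    (Δ : ℕ → ℝ) (hΔn : Δ n = 0) (hΔpos : ∀ j, 1 ≤ j → j < n → 0 < Δ j)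
    (σ : Equiv.Perm ℕ) (hσ : ∀ i ∈ Finset.Icc 1 n, σ i ∈ Finset.Icc 1 n)
    (hanti : ∀ i j, 1 ≤ i → i ≤ j → j ≤ n → Δ (σ j) ≤ Δ (σ i))
    (hlast : Δ (σ n) = 0)
    (a : ℕ → ℕ)
    (hcon : ∀ j, 1 ≤ j → j < n → 0 < a j →
      (∑ i ∈ Finset.Icc 1 j, (a i : ℝ)) ≤ C / (Δ j) ^ 2 + 1) :
    (∑ j ∈ Finset.Icc 1 n, (a j : ℝ) * Δ j)
      ≤ Δ (σ 1) + C / Δ (σ 1)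
          + C * ∑ i ∈ Finset.Icc 2 (n - 1),
              (1 / (Δ (σ i)) ^ 2 - 1 / (Δ (σ (i - 1))) ^ 2) * Δ (σ i) := by
  have hσinj : Function.Injective σ := σ.injective
  -- σ fixes n
  have hσn : σ n = n := by
    have h1 : σ n ∈ Finset.Icc 1 n := hσ n (by rw [Finset.mem_Icc]; omega)
    rw [Finset.mem_Icc] at h1
    by_contra h
    have : 0 < Δ (σ n) := hΔpos _ h1.1 (lt_of_le_of_ne h1.2 h)
    linarith
  -- positivity of sorted gaps
  have hdpos : ∀ i, 1 ≤ i → i ≤ n - 1 → 0 < Δ (σ i) := by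
    intro i h1 h2
    have hi : σ i ∈ Finset.Icc 1 n := hσ i (by rw [Finset.mem_Icc]; omega)
    rw [Finset.mem_Icc] at hi
    have hne : σ i ≠ n := by
      intro h
      have : i = n := hσinj (h.trans hσn.symm)
      omega
    exact hΔpos _ hi.1 (lt_of_le_of_ne hi.2 hne)
  -- telescoping
  have htel : ∀ m, 1 ≤ m → m ≤ n - 1 →
      ∑ i ∈ Finset.Icc m (n - 1), (Δ (σ i) - Δ (σ (i + 1))) = Δ (σ m) := by
    intro m h1 h2
    have hIcc : Finset.Icc m (n - 1) = Finset.Ico m n := by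
      rw [← Finset.Ico_add_one_right_eq_Icc]
      congr 1
      omega
    rw [hIcc, tele_aux (fun i => Δ (σ i)) m n (by omega), hlast, sub_zero]
  -- reindexing by σ
  have himg : (Finset.Icc 1 n).image σ = Finset.Icc 1 n := by
    apply Finset.eq_of_subset_of_card_le
    · intro j hj
      obtain ⟨m, hm, rfl⟩ := Finset.mem_image.mp hj
      exact hσ m hm
    · rw [Finset.card_image_of_injective _ hσinj]
  have hre : ∑ j ∈ Finset.Icc 1 n, (a j : ℝ) * Δ j
      = ∑ m ∈ Finset.Icc 1 n, (a (σ m) : ℝ) * Δ (σ m) := by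
    conv_lhs => rw [← himg]
    rw [Finset.sum_image (fun x _ y _ h => hσinj h)]
  -- drop the last (zero) term
  have hdrop : ∑ m ∈ Finset.Icc 1 n, (a (σ m) : ℝ) * Δ (σ m)
      = ∑ m ∈ Finset.Icc 1 (n - 1), (a (σ m) : ℝ) * Δ (σ m) := by
    have hn' : n = (n - 1) + 1 := by omega
    rw [hn', Finset.sum_Icc_succ_top (by omega : 1 ≤ (n - 1) + 1), ← hn', hlast,
      mul_zero, add_zero]
  -- bound on partial sums
  have hSbound : ∀ i, 1 ≤ i → i ≤ n - 1 →
      ∑ m ∈ Finset.Icc 1 i, (a (σ m) : ℝ) ≤ C / (Δ (σ i)) ^ 2 + 1 := by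
    intro i h1 h2
    have hdi : 0 < Δ (σ i) := hdpos i h1 h2
    by_cases hall : ∀ m ∈ Finset.Icc 1 i, a (σ m) = 0
    · have hz : ∑ m ∈ Finset.Icc 1 i, (a (σ m) : ℝ) = 0 :=
        Finset.sum_eq_zero (by intro m hm; exact_mod_cast congrArg Nat.cast (hall m hm))
      rw [hz]
      positivity
    · push_neg at hall
      set s := (Finset.Icc 1 i).filter (fun m => 0 < a (σ m)) with hs
      have hsne : s.Nonempty := by
        obtain ⟨m₀, hm₀, hm₀'⟩ := hall
        exact ⟨m₀, Finset.mem_filter.mpr ⟨hm₀, Nat.pos_of_ne_zero hm₀'⟩⟩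
      set t := s.image σ with ht
      have htne : t.Nonempty := hsne.image σ
      obtain ⟨mstar, hmstar, hms⟩ := Finset.mem_image.mp (t.max'_mem htne)
      have hmsIcc : 1 ≤ mstar ∧ mstar ≤ i := by
        have := (Finset.mem_filter.mp hmstar).1
        rwa [Finset.mem_Icc] at this
      have hams : 0 < a (σ mstar) := (Finset.mem_filter.mp hmstar).2
      have hdm : Δ (σ i) ≤ Δ (σ mstar) := hanti mstar i hmsIcc.1 hmsIcc.2 (by omega)
      have hdms : 0 < Δ (σ mstar) := lt_of_lt_of_le hdi hdm
      have hjIcc : σ mstar ∈ Finset.Icc 1 n := hσ mstar (by rw [Finset.mem_Icc]; omega)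
      rw [Finset.mem_Icc] at hjIcc
      have hjlt : σ mstar < n := by
        rcases lt_or_eq_of_le hjIcc.2 with h | h
        · exact h
        · rw [h] at hdms; linarith
      have hsum1 : ∑ m ∈ Finset.Icc 1 i, (a (σ m) : ℝ) = ∑ m ∈ s, (a (σ m) : ℝ) := by
        rw [hs]
        refine (Finset.sum_filter_of_ne ?_).symm
        intro m _ hne
        have : a (σ m) ≠ 0 := by exact_mod_cast hne
        omega
      have hsum2 : ∑ m ∈ s, (a (σ m) : ℝ) = ∑ j ∈ t, (a j : ℝ) := by
        rw [ht, Finset.sum_image (fun x _ y _ h => hσinj h)]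
      have hsub : t ⊆ Finset.Icc 1 (σ mstar) := by
        intro j hjt
        have hle : j ≤ σ mstar := hms ▸ t.le_max' j hjt
        obtain ⟨m, hmm, rfl⟩ := Finset.mem_image.mp hjt
        have hmIcc : m ∈ Finset.Icc 1 i := (Finset.mem_filter.mp hmm).1
        rw [Finset.mem_Icc] at hmIcc
        have h1m : σ m ∈ Finset.Icc 1 n := hσ m (by rw [Finset.mem_Icc]; omega)
        rw [Finset.mem_Icc] at h1m ⊢
        exact ⟨h1m.1, hle⟩
      have hmono : ∑ j ∈ t, (a j : ℝ) ≤ ∑ j ∈ Finset.Icc 1 (σ mstar), (a j : ℝ) :=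
        Finset.sum_le_sum_of_subset_of_nonneg hsub (by intros; positivity)
      have hc := hcon (σ mstar) hjIcc.1 hjlt hams
      have hfrac : C / (Δ (σ mstar)) ^ 2 ≤ C / (Δ (σ i)) ^ 2 := by
        have hsq : (Δ (σ i)) ^ 2 ≤ (Δ (σ mstar)) ^ 2 := by nlinarith
        rw [div_le_div_iff₀ (by positivity) (by positivity)]
        exact mul_le_mul_of_nonneg_left hsq hC.le
      calc ∑ m ∈ Finset.Icc 1 i, (a (σ m) : ℝ)
          = ∑ j ∈ t, (a j : ℝ) := by rw [hsum1, hsum2]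
        _ ≤ ∑ j ∈ Finset.Icc 1 (σ mstar), (a j : ℝ) := hmono
        _ ≤ C / (Δ (σ mstar)) ^ 2 + 1 := hc
        _ ≤ C / (Δ (σ i)) ^ 2 + 1 := by linarith
  -- decompose the sum using the telescoping identity and swap the order
  have hsplit : ∑ m ∈ Finset.Icc 1 (n - 1), (a (σ m) : ℝ) * Δ (σ m)
      = ∑ i ∈ Finset.Icc 1 (n - 1),
          (Δ (σ i) - Δ (σ (i + 1))) * ∑ m ∈ Finset.Icc 1 i, (a (σ m) : ℝ) := by
    calc ∑ m ∈ Finset.Icc 1 (n - 1), (a (σ m) : ℝ) * Δ (σ m)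
        = ∑ m ∈ Finset.Icc 1 (n - 1), ∑ i ∈ Finset.Icc m (n - 1),
            (a (σ m) : ℝ) * (Δ (σ i) - Δ (σ (i + 1))) := by
          refine Finset.sum_congr rfl fun m hm => ?_
          rw [Finset.mem_Icc] at hm
          rw [← Finset.mul_sum, htel m hm.1 hm.2]
      _ = ∑ i ∈ Finset.Icc 1 (n - 1), ∑ m ∈ Finset.Icc 1 i,
            (a (σ m) : ℝ) * (Δ (σ i) - Δ (σ (i + 1))) := by
          refine Finset.sum_comm' ?_
          intro x y
          simp only [Finset.mem_Icc]
          omega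
      _ = ∑ i ∈ Finset.Icc 1 (n - 1),
            (Δ (σ i) - Δ (σ (i + 1))) * ∑ m ∈ Finset.Icc 1 i, (a (σ m) : ℝ) := by
          refine Finset.sum_congr rfl fun i _ => ?_
          rw [Finset.mul_sum]
          refine Finset.sum_congr rfl fun m _ => ?_
          ring
  -- main estimate
  have hmain : (∑ j ∈ Finset.Icc 1 n, (a j : ℝ) * Δ j)
      ≤ ∑ i ∈ Finset.Icc 1 (n - 1),
          (Δ (σ i) - Δ (σ (i + 1))) * (C / (Δ (σ i)) ^ 2 + 1) := by
    rw [hre, hdrop, hsplit]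
    refine Finset.sum_le_sum fun i hi => ?_
    rw [Finset.mem_Icc] at hi
    have hge : 0 ≤ Δ (σ i) - Δ (σ (i + 1)) := by
      have := hanti i (i + 1) hi.1 (by omega) (by omega)
      linarith
    exact mul_le_mul_of_nonneg_left (hSbound i hi.1 hi.2) hge
  -- final algebra
  have habel := abel_aux (fun i => Δ (σ i)) (n - 1) (by omega)
    (fun i h1 h2 => ne_of_gt (hdpos i h1 h2))
  have hzero : Δ (σ ((n - 1) + 1)) = 0 := by
    rw [show (n - 1) + 1 = n by omega, hlast]
  rw [hzero, zero_div, sub_zero] at habel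
  have halg : ∑ i ∈ Finset.Icc 1 (n - 1),
        (Δ (σ i) - Δ (σ (i + 1))) * (C / (Δ (σ i)) ^ 2 + 1)
      = Δ (σ 1) + C / Δ (σ 1)
          + C * ∑ i ∈ Finset.Icc 2 (n - 1),
              (1 / (Δ (σ i)) ^ 2 - 1 / (Δ (σ (i - 1))) ^ 2) * Δ (σ i) := by
    have hexp : ∀ i ∈ Finset.Icc 1 (n - 1),
        (Δ (σ i) - Δ (σ (i + 1))) * (C / (Δ (σ i)) ^ 2 + 1)
          = (Δ (σ i) - Δ (σ (i + 1)))
            + C * ((Δ (σ i) - Δ (σ (i + 1))) / (Δ (σ i)) ^ 2) := by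
      intro i _
      ring
    rw [Finset.sum_congr rfl hexp, Finset.sum_add_distrib, ← Finset.mul_sum,
      htel 1 le_rfl (by omega), habel]
    have hd1 : Δ (σ 1) ≠ 0 := ne_of_gt (hdpos 1 le_rfl (by omega))
    field_simp
    ring
  linarith
end
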